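/- arXiv:1812.10145 — 2 statements merged into one kernel-verified Lean document; each statement's English description precedes it below -/
import Mathlib

section
/- For d = 3 and the T state |T⟩ = (ξ|0⟩ + |1⟩ + ξ^{−1}|2⟩)/√3 in ℂ³, where ξ = exp(2πi/9), the max-thauma SDP has optimal value inf{ ‖V‖_{W,1} : V Hermitian on ℂ³, V ≥ |T⟩⟨T| } = 1 + 2·sin(π/18); that is, θ_max(T) = log₂(1 + 2 sin(π/18)). -/
open Matrix Complex BigOperators
open scoped ComplexOrder

noncomputable section

namespace Magic

/-- ω = exp(2πi/d) -/
def omegaC (d : ℕ) : ℂ := Complex.exp (2 * Real.pi * Complex.I / d)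

/-- τ = exp((d+1)πi/d) -/
def tauC (d : ℕ) : ℂ := Complex.exp ((d + 1) * Real.pi * Complex.I / d)

/-- Shift operator X|j⟩ = |j⊕1⟩. -/
def shiftX (d : ℕ) [NeZero d] : Matrix (ZMod d) (ZMod d) ℂ :=
  Matrix.of fun r c => if r = c + 1 then 1 else 0

/-- Boost operator Z|j⟩ = ω^j |j⟩. -/
def boostZ (d : ℕ) [NeZero d] : Matrix (ZMod d) (ZMod d) ℂ :=
  Matrix.diagonal fun j => omegaC d ^ j.val

/-- Heisenberg–Weyl operator T_u = τ^{-a₁a₂} Z^{a₁} X^{a₂}. -/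
def HW (d : ℕ) [NeZero d] (u : ZMod d × ZMod d) : Matrix (ZMod d) (ZMod d) ℂ :=
  tauC d ^ (-((u.1.val * u.2.val : ℕ) : ℤ)) • (boostZ d ^ u.1.val * shiftX d ^ u.2.val)

/-- A₀ = (1/d) ∑_u T_u. -/
def A0 (d : ℕ) [NeZero d] : Matrix (ZMod d) (ZMod d) ℂ :=
  (d : ℂ)⁻¹ • ∑ u : ZMod d × ZMod d, HW d u

/-- Phase-space point operators A_u = T_u A₀ T_u†. -/
def Apt (d : ℕ) [NeZero d] (u : ZMod d × ZMod d) : Matrix (ZMod d) (ZMod d) ℂ :=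
  HW d u * A0 d * (HW d u)ᴴ

/-- Discrete Wigner function W_V(u) = tr(A_u V)/d. -/
def wig (d : ℕ) [NeZero d] (V : Matrix (ZMod d) (ZMod d) ℂ) (u : ZMod d × ZMod d) : ℂ :=
  (Apt d u * V).trace / d

/-- Wigner trace norm ‖V‖_{W,1} = ∑_u |W_V(u)|. -/
def wnorm1 (d : ℕ) [NeZero d] (V : Matrix (ZMod d) (ZMod d) ℂ) : ℝ :=
  ∑ u : ZMod d × ZMod d, ‖wig d V u‖

/-- Wigner spectral norm ‖V‖_{W,∞} = d · max_u |W_V(u)|. -/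
def wnormInf (d : ℕ) [NeZero d] (V : Matrix (ZMod d) (ZMod d) ℂ) : ℝ :=
  (d : ℝ) * ⨆ u : ZMod d × ZMod d, ‖wig d V u‖

end Magic

namespace Magic

/-- The Strange state |S⟩ = (|1⟩ - |2⟩)/√2. -/
def strange : ZMod 3 → ℂ :=
  fun j => if j = 1 then ((Real.sqrt 2)⁻¹ : ℝ)
    else if j = 2 then (-(Real.sqrt 2)⁻¹ : ℝ) else 0

/-- The Norrell state |N⟩ = (-|0⟩ + 2|1⟩ - |2⟩)/√6. -/
def norrell : ZMod 3 → ℂ :=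
  fun j => if j = 1 then ((2 / Real.sqrt 6 : ℝ) : ℂ) else ((-(Real.sqrt 6)⁻¹ : ℝ) : ℂ)

/-- The H₊ state |H₊⟩ = ((1+√3)|0⟩ + |1⟩ + |2⟩)/√(2(3+√3)). -/
def hplus : ZMod 3 → ℂ :=
  fun j => if j = 0 then (((1 + Real.sqrt 3) / Real.sqrt (2 * (3 + Real.sqrt 3)) : ℝ) : ℂ)
    else (((Real.sqrt (2 * (3 + Real.sqrt 3)))⁻¹ : ℝ) : ℂ)

/-- ξ = exp(2πi/9). -/
def xi : ℂ := Complex.exp (2 * Real.pi * Complex.I / 9)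

/-- The T state |T⟩ = (ξ|0⟩ + |1⟩ + ξ⁻¹|2⟩)/√3. -/
def tket : ZMod 3 → ℂ :=
  fun j => (if j = 0 then xi else if j = 1 then 1 else xi⁻¹) / ((Real.sqrt 3 : ℝ) : ℂ)

/-- The rank-one projector |ψ⟩⟨ψ|. -/
def projOf (ψ : ZMod 3 → ℂ) : Matrix (ZMod 3) (ZMod 3) ℂ :=
  Matrix.vecMulVec ψ (star ψ)

end Magic


namespace Magic

section Aux

-- ### basic xi facts
lemma hxi9 : xi ^ 9 = 1 := by
  rw [xi, ← Complex.exp_nat_mul]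
  rw [show (9:ℕ) * (2 * Real.pi * Complex.I / 9) = 2 * Real.pi * Complex.I by push_cast; ring]
  exact Complex.exp_two_pi_mul_I

lemma hxc : xi ^ 6 + xi ^ 3 + 1 = 0 := by
  have h3 : xi ^ 3 = Complex.exp (2 * Real.pi * Complex.I / 3) := by
    rw [xi, ← Complex.exp_nat_mul]; congr 1; push_cast; ring
  have hprim : IsPrimitiveRoot (Complex.exp (2 * Real.pi * Complex.I / 3)) 3 :=
    Complex.isPrimitiveRoot_exp 3 (by norm_num)
  have hne : xi ^ 3 - 1 ≠ 0 := sub_ne_zero.mpr (by rw [h3]; exact hprim.ne_one (by norm_num))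
  have hcube : (xi ^ 3) ^ 3 = 1 := by rw [← pow_mul]; exact hxi9
  have h : (xi ^ 3 - 1) * (xi ^ 6 + xi ^ 3 + 1) = 0 := by linear_combination hcube
  exact (mul_eq_zero.mp h).resolve_left hne

lemma xi_inv : xi⁻¹ = xi ^ 8 := by
  apply inv_eq_of_mul_eq_one_right; rw [← pow_succ']; exact hxi9

lemma conj_xi : (starRingEnd ℂ) xi = xi ^ 8 := by
  rw [xi, ← Complex.exp_conj]
  rw [show (starRingEnd ℂ) (2 * Real.pi * Complex.I / 9) = -(2 * Real.pi * Complex.I / 9) by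
    simp only [map_div₀, _root_.map_mul, Complex.conj_I, Complex.conj_ofReal, map_ofNat]; ring]
  rw [Complex.exp_neg, ← xi, xi_inv]

lemma conj_xi_pow (n : ℕ) : (starRingEnd ℂ) (xi ^ n) = xi ^ (8 * n) := by
  rw [map_pow, conj_xi, ← pow_mul, mul_comm]

lemma omega3 : omegaC 3 = xi ^ 3 := by
  rw [omegaC, xi, ← Complex.exp_nat_mul]; congr 1; push_cast; ring

lemma tau3 : tauC 3 = xi ^ 6 := by
  rw [tauC, xi, ← Complex.exp_nat_mul]; congr 1; push_cast; ring

lemma tau_zpow (n : ℕ) : tauC 3 ^ (-(n:ℤ)) = xi ^ (3 * n) := by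
  rw [_root_.zpow_neg, zpow_natCast, tau3, ← pow_mul]
  apply inv_eq_of_mul_eq_one_left
  rw [← pow_add, show 3*n + 6*n = 9*n by ring, pow_mul, hxi9, one_pow]

-- ### sums over ZMod 3
lemma sumZ3 {M : Type*} [AddCommMonoid M] (f : ZMod 3 → M) : ∑ j, f j = f 0 + f 1 + f 2 :=
  Fin.sum_univ_three f

@[simp] lemma valz : (0 : ZMod 3).val = 0 := rfl
@[simp] lemma valo : (1 : ZMod 3).val = 1 := rfl
@[simp] lemma valt : (2 : ZMod 3).val = 2 := rfl

lemma hz3 : ∀ z : ZMod 3, z = 0 ∨ z = 1 ∨ z = 2 := by decide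

@[simp] lemma z1ne0 : (1 : ZMod 3) ≠ 0 := by decide
@[simp] lemma z2ne0 : (2 : ZMod 3) ≠ 0 := by decide
@[simp] lemma z2ne1 : (2 : ZMod 3) ≠ 1 := by decide

-- ### matrix building blocks
lemma shiftX_pow (n : ℕ) :
    (shiftX 3) ^ n = Matrix.of fun r c => if r = c + (n : ZMod 3) then 1 else 0 := by
  induction n with
  | zero => ext r c; simp [Matrix.one_apply, eq_comm]
  | succ n ih =>
    ext r c
    rw [pow_succ, ih]
    simp only [Matrix.mul_apply, Matrix.of_apply, shiftX]
    rw [Finset.sum_eq_single (c+1)]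
    · push_cast
      simp [add_comm, add_assoc, add_left_comm]
    · intro b _ hb; simp [hb]
    · simp

lemma boostZ_pow (n : ℕ) :
    (boostZ 3) ^ n = Matrix.diagonal fun j => xi ^ (3 * (j.val * n)) := by
  rw [boostZ, Matrix.diagonal_pow]
  have : ((fun j : ZMod 3 => omegaC 3 ^ j.val) ^ n) = fun j : ZMod 3 => xi ^ (3 * (j.val * n)) := by
    funext j
    simp only [Pi.pow_apply, omega3, ← pow_mul]
    congr 1
    ring
  rw [this]

lemma HW3_apply (a b r c : ZMod 3) :
    HW 3 (a, b) r c = if r = c + b then xi ^ (3 * (a.val * b.val)) * xi ^ (3 * (r.val * a.val)) else 0 := by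
  rw [HW]
  simp only [Matrix.smul_apply, boostZ_pow, shiftX_pow, Matrix.diagonal_mul, Matrix.of_apply,
    tau_zpow, smul_eq_mul]
  rw [show ((((a,b).2 : ZMod 3).val : ZMod 3)) = b by simp [ZMod.natCast_val, ZMod.cast_id]]
  split
  · ring_nf
  · ring

lemma A0_eq : A0 3 = Matrix.of fun r c => if r + c = 0 then (1:ℂ) else 0 := by
  ext r c
  simp only [A0, Matrix.smul_apply, Matrix.sum_apply, Matrix.add_apply, Fintype.sum_prod_type,
    sumZ3, ← Prod.mk_zero_zero, ← Prod.mk_one_one, HW3_apply,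
    Matrix.of_apply, smul_eq_mul]
  rcases hz3 r with rfl|rfl|rfl <;> rcases hz3 c with rfl|rfl|rfl <;>
    simp (config := { decide := true }) only [valz, valo, valt] <;>
    norm_num <;>
    first
      | linear_combination hxc
      | linear_combination (xi^6 - xi^3 + 1) * hxc
      | linear_combination (xi^18 - xi^15 + xi^9 - xi^6 + xi^3 * xi^3 * xi^3 - xi^3 + 1 - xi^3 * xi^3 * xi^3) * hxc
      | linear_combination ((xi^3 - 1) * (xi^9 + 2) / 3) * hxc
      | linear_combination (1 - xi^3 + xi^9 - xi^15 + xi^18) * hxc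
      | skip

end Aux
end Magic

namespace Magic
section Main

-- constants
def c1d : ℝ := 2 * Real.cos (2*Real.pi/9)
def c2d : ℝ := 2 * Real.cos (4*Real.pi/9)
def yD : ℝ := 1 - c1d + c2d
def mu1 : ℝ := (1 + c2d)/3
def mu2 : ℝ := (2 - c1d)/3
def pvec : ZMod 3 → ℂ := fun j => xi ^ (8*j.val)
def qvec : ZMod 3 → ℂ := fun j => xi ^ (5*j.val)
def wv : ZMod 3 → ℂ := fun j => ((Real.sqrt (c2d/3) : ℝ) : ℂ) * xi ^ (2*j.val)
def Vopt : Matrix (ZMod 3) (ZMod 3) ℂ := projOf tket + projOf wv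

lemma xipow_exp (n : ℕ) : xi ^ n = Complex.exp (((2*n*Real.pi/9 : ℝ) : ℂ) * Complex.I) := by
  rw [xi, ← Complex.exp_nat_mul]; congr 1; push_cast; ring

lemma hc1C : ((c1d : ℝ) : ℂ) = xi + xi^8 := by
  have h1 : xi = Complex.exp (((2*Real.pi/9 : ℝ) : ℂ) * Complex.I) := by
    rw [← pow_one xi, xipow_exp 1]; norm_num
  have h8 : xi^8 = (starRingEnd ℂ) xi := conj_xi.symm
  rw [h8, h1, Complex.add_conj, Complex.exp_ofReal_mul_I_re, c1d]

lemma hc2C : ((c2d : ℝ) : ℂ) = xi^2 + xi^7 := by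
  have h2 : xi^2 = Complex.exp (((4*Real.pi/9 : ℝ) : ℂ) * Complex.I) := by
    rw [xipow_exp 2]; norm_num
  have h7 : xi^7 = (starRingEnd ℂ) (xi^2) := by
    rw [conj_xi_pow]; linear_combination (-(xi^7)) * hxi9
  rw [h7, h2, Complex.add_conj, Complex.exp_ofReal_mul_I_re, c2d]

lemma hyC : ((yD : ℝ) : ℂ) = 1 - (xi + xi^8) + (xi^2 + xi^7) := by
  rw [yD]; push_cast [hc1C, hc2C]; ring

lemma hmu1C : ((mu1 : ℝ) : ℂ) = (1 + (xi^2 + xi^7))/3 := by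
  rw [mu1]; push_cast [hc2C]; ring

lemma hmu2C : ((mu2 : ℝ) : ℂ) = (2 - (xi + xi^8))/3 := by
  rw [mu2]; push_cast [hc1C]; ring

lemma nonneg_c2d : 0 ≤ c2d := by
  rw [c2d]
  have : (0:ℝ) ≤ Real.cos (4*Real.pi/9) := by
    apply Real.cos_nonneg_of_mem_Icc
    constructor <;> nlinarith [Real.pi_pos]
  linarith

lemma c1d_le_two : c1d ≤ 2 := by
  rw [c1d]; nlinarith [Real.cos_le_one (2*Real.pi/9)]

lemma c2d_le_c1d : c2d ≤ c1d := by
  rw [c1d, c2d]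
  have := Real.cos_le_cos_of_nonneg_of_le_pi (x := 2*Real.pi/9) (y := 4*Real.pi/9)
    (by positivity) (by nlinarith [Real.pi_pos]) (by nlinarith [Real.pi_pos])
  linarith

lemma abs_yD : |yD| ≤ 1 := by
  rw [abs_le, yD]
  constructor <;> [linarith [c1d_le_two, nonneg_c2d]; linarith [c2d_le_c1d]]

lemma nonneg_mu1 : 0 ≤ mu1 := by rw [mu1]; linarith [nonneg_c2d]
lemma nonneg_mu2 : 0 ≤ mu2 := by rw [mu2]; linarith [c1d_le_two]

-- tket entries
def nu : ZMod 3 → ℂ := fun j => if j = 0 then xi else if j = 1 then 1 else xi^8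
def nuc : ZMod 3 → ℂ := fun j => if j = 0 then xi^8 else if j = 1 then 1 else xi

lemma xi8_inv : (xi^8)⁻¹ = xi := by
  apply inv_eq_of_mul_eq_one_right; rw [← pow_succ]; exact hxi9

lemma tkentry (j k : ZMod 3) : projOf tket j k = nu j * nuc k / 3 := by
  have h3 : ((Real.sqrt 3 : ℝ) : ℂ) * ((Real.sqrt 3 : ℝ) : ℂ) = 3 := by
    rw [← Complex.ofReal_mul, Real.mul_self_sqrt (by norm_num)]; norm_num
  have hconj : (starRingEnd ℂ) (tket k) = nuc k / ((Real.sqrt 3 : ℝ) : ℂ) := by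
    rw [tket]
    simp only [map_div₀, Complex.conj_ofReal]
    congr 1
    rcases hz3 k with rfl|rfl|rfl
    · simp [nuc, conj_xi]
    · simp [nuc]
    · simp [nuc, map_inv₀, conj_xi, xi8_inv]
  rw [projOf, Matrix.vecMulVec_apply, Pi.star_apply, Complex.star_def, hconj, tket]
  rw [div_mul_div_comm, h3]
  congr 1
  rcases hz3 j with rfl|rfl|rfl <;> simp [nu, xi_inv]

lemma Vopt_entry (j k : ZMod 3) :
    Vopt j k = nu j * nuc k / 3 + (xi^2 + xi^7)/3 * (xi ^ (2*j.val) * xi ^ (8*(2*k.val))) := by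
  have hr : ((Real.sqrt (c2d/3) : ℝ) : ℂ) * ((Real.sqrt (c2d/3) : ℝ) : ℂ) = (xi^2 + xi^7)/3 := by
    rw [← Complex.ofReal_mul, Real.mul_self_sqrt (div_nonneg nonneg_c2d (by norm_num))]
    rw [Complex.ofReal_div, hc2C]
    norm_num
  rw [Vopt, Matrix.add_apply, tkentry, projOf, Matrix.vecMulVec_apply, Pi.star_apply,
    Complex.star_def]
  simp only [wv, _root_.map_mul, Complex.conj_ofReal, conj_xi_pow]
  linear_combination (xi ^ (2*j.val) * xi ^ (8*(2*k.val))) * hr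

lemma wig00 (V : Matrix (ZMod 3) (ZMod 3) ℂ) :
    wig 3 V (0, 0) = (xi ^ 0 * V 0 0 + xi ^ 0 * V 2 1 + xi ^ 0 * V 1 2) / 3 := by
  simp (config := { decide := true }) only [wig, Apt, Matrix.trace, Matrix.diag,
    Matrix.mul_apply, Matrix.conjTranspose_apply, Matrix.add_apply, sumZ3, HW3_apply, A0_eq,
    Matrix.of_apply, Complex.star_def, if_true, if_false, apply_ite (starRingEnd ℂ),
    _root_.map_mul, map_pow, conj_xi, map_zero, _root_.map_one, valz, valo, valt]
  try simp only [conj_xi, ← pow_mul]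
  norm_num
  try ring

lemma wig01 (V : Matrix (ZMod 3) (ZMod 3) ℂ) :
    wig 3 V (0, 1) = (xi ^ 0 * V 2 0 + xi ^ 0 * V 1 1 + xi ^ 0 * V 0 2) / 3 := by
  simp (config := { decide := true }) only [wig, Apt, Matrix.trace, Matrix.diag,
    Matrix.mul_apply, Matrix.conjTranspose_apply, Matrix.add_apply, sumZ3, HW3_apply, A0_eq,
    Matrix.of_apply, Complex.star_def, if_true, if_false, apply_ite (starRingEnd ℂ),
    _root_.map_mul, map_pow, conj_xi, map_zero, _root_.map_one, valz, valo, valt]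
  try simp only [conj_xi, ← pow_mul]
  norm_num
  try ring

lemma wig02 (V : Matrix (ZMod 3) (ZMod 3) ℂ) :
    wig 3 V (0, 2) = (xi ^ 0 * V 1 0 + xi ^ 0 * V 0 1 + xi ^ 0 * V 2 2) / 3 := by
  simp (config := { decide := true }) only [wig, Apt, Matrix.trace, Matrix.diag,
    Matrix.mul_apply, Matrix.conjTranspose_apply, Matrix.add_apply, sumZ3, HW3_apply, A0_eq,
    Matrix.of_apply, Complex.star_def, if_true, if_false, apply_ite (starRingEnd ℂ),
    _root_.map_mul, map_pow, conj_xi, map_zero, _root_.map_one, valz, valo, valt]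
  try simp only [conj_xi, ← pow_mul]
  norm_num
  try ring

lemma wig10 (V : Matrix (ZMod 3) (ZMod 3) ℂ) :
    wig 3 V (1, 0) = (xi ^ 0 * V 0 0 + xi ^ 51 * V 2 1 + xi ^ 30 * V 1 2) / 3 := by
  simp (config := { decide := true }) only [wig, Apt, Matrix.trace, Matrix.diag,
    Matrix.mul_apply, Matrix.conjTranspose_apply, Matrix.add_apply, sumZ3, HW3_apply, A0_eq,
    Matrix.of_apply, Complex.star_def, if_true, if_false, apply_ite (starRingEnd ℂ),
    _root_.map_mul, map_pow, conj_xi, map_zero, _root_.map_one, valz, valo, valt]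
  try simp only [conj_xi, ← pow_mul]
  norm_num
  try ring

lemma wig11 (V : Matrix (ZMod 3) (ZMod 3) ℂ) :
    wig 3 V (1, 1) = (xi ^ 75 * V 2 0 + xi ^ 54 * V 1 1 + xi ^ 33 * V 0 2) / 3 := by
  simp (config := { decide := true }) only [wig, Apt, Matrix.trace, Matrix.diag,
    Matrix.mul_apply, Matrix.conjTranspose_apply, Matrix.add_apply, sumZ3, HW3_apply, A0_eq,
    Matrix.of_apply, Complex.star_def, if_true, if_false, apply_ite (starRingEnd ℂ),
    _root_.map_mul, map_pow, conj_xi, map_zero, _root_.map_one, valz, valo, valt]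
  try simp only [conj_xi, ← pow_mul]
  norm_num
  try ring

lemma wig12 (V : Matrix (ZMod 3) (ZMod 3) ℂ) :
    wig 3 V (1, 2) = (xi ^ 78 * V 1 0 + xi ^ 57 * V 0 1 + xi ^ 108 * V 2 2) / 3 := by
  simp (config := { decide := true }) only [wig, Apt, Matrix.trace, Matrix.diag,
    Matrix.mul_apply, Matrix.conjTranspose_apply, Matrix.add_apply, sumZ3, HW3_apply, A0_eq,
    Matrix.of_apply, Complex.star_def, if_true, if_false, apply_ite (starRingEnd ℂ),
    _root_.map_mul, map_pow, conj_xi, map_zero, _root_.map_one, valz, valo, valt]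
  try simp only [conj_xi, ← pow_mul]
  norm_num
  try ring

lemma wig20 (V : Matrix (ZMod 3) (ZMod 3) ℂ) :
    wig 3 V (2, 0) = (xi ^ 0 * V 0 0 + xi ^ 102 * V 2 1 + xi ^ 60 * V 1 2) / 3 := by
  simp (config := { decide := true }) only [wig, Apt, Matrix.trace, Matrix.diag,
    Matrix.mul_apply, Matrix.conjTranspose_apply, Matrix.add_apply, sumZ3, HW3_apply, A0_eq,
    Matrix.of_apply, Complex.star_def, if_true, if_false, apply_ite (starRingEnd ℂ),
    _root_.map_mul, map_pow, conj_xi, map_zero, _root_.map_one, valz, valo, valt]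
  try simp only [conj_xi, ← pow_mul]
  norm_num
  try ring

lemma wig21 (V : Matrix (ZMod 3) (ZMod 3) ℂ) :
    wig 3 V (2, 1) = (xi ^ 150 * V 2 0 + xi ^ 108 * V 1 1 + xi ^ 66 * V 0 2) / 3 := by
  simp (config := { decide := true }) only [wig, Apt, Matrix.trace, Matrix.diag,
    Matrix.mul_apply, Matrix.conjTranspose_apply, Matrix.add_apply, sumZ3, HW3_apply, A0_eq,
    Matrix.of_apply, Complex.star_def, if_true, if_false, apply_ite (starRingEnd ℂ),
    _root_.map_mul, map_pow, conj_xi, map_zero, _root_.map_one, valz, valo, valt]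
  try simp only [conj_xi, ← pow_mul]
  norm_num
  try ring

lemma wig22 (V : Matrix (ZMod 3) (ZMod 3) ℂ) :
    wig 3 V (2, 2) = (xi ^ 156 * V 1 0 + xi ^ 114 * V 0 1 + xi ^ 216 * V 2 2) / 3 := by
  simp (config := { decide := true }) only [wig, Apt, Matrix.trace, Matrix.diag,
    Matrix.mul_apply, Matrix.conjTranspose_apply, Matrix.add_apply, sumZ3, HW3_apply, A0_eq,
    Matrix.of_apply, Complex.star_def, if_true, if_false, apply_ite (starRingEnd ℂ),
    _root_.map_mul, map_pow, conj_xi, map_zero, _root_.map_one, valz, valo, valt]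
  try simp only [conj_xi, ← pow_mul]
  norm_num
  try ring

lemma wigV00 : wig 3 Vopt (0, 0) = (((1:ℝ)/3 : ℝ) : ℂ) := by
  rw [wig00]
  simp (config := { decide := true }) only [Vopt_entry, nu, nuc, if_true, if_false, valz, valo, valt]
  rw [show (((1:ℝ)/3 : ℝ) : ℂ) = 1/3 by push_cast; ring]
  linear_combination (((-1/3) + (1/9)*xi + (1/9)*xi^2 + (1/3)*xi^3 + (-1/9)*xi^4 + (-1/9)*xi^5 + (1/9)*xi^7 + (1/9)*xi^8 + (-2/9)*xi^9 + (2/9)*xi^12 + (-1/9)*xi^13 + (-1/9)*xi^14 + (1/9)*xi^16 + (1/9)*xi^17 + (-2/9)*xi^18 + (2/9)*xi^21 + (-1/9)*xi^23 + (1/9)*xi^26 + (-1/9)*xi^27 + (1/9)*xi^30 + (-1/9)*xi^32 + (1/9)*xi^35)) * hxc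

lemma wigV02 : wig 3 Vopt (0, 2) = (((1:ℝ)/3 : ℝ) : ℂ) := by
  rw [wig02]
  simp (config := { decide := true }) only [Vopt_entry, nu, nuc, if_true, if_false, valz, valo, valt]
  rw [show (((1:ℝ)/3 : ℝ) : ℂ) = 1/3 by push_cast; ring]
  linear_combination (((-1/3) + (1/9)*xi + (1/3)*xi^3 + (-1/9)*xi^7 + (1/9)*xi^8 + (-1/9)*xi^9 + (1/9)*xi^10 + (-1/9)*xi^11 + (1/9)*xi^12 + (-1/9)*xi^16 + (1/9)*xi^17 + (1/9)*xi^19 + (-1/9)*xi^20 + (1/9)*xi^23 + (-1/9)*xi^25 + (1/9)*xi^28 + (-1/9)*xi^29 + (1/9)*xi^32 + (-1/9)*xi^34 + (1/9)*xi^37)) * hxc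

lemma wigV11 : wig 3 Vopt (1, 1) = (((1:ℝ)/3 : ℝ) : ℂ) := by
  rw [wig11]
  simp (config := { decide := true }) only [Vopt_entry, nu, nuc, if_true, if_false, valz, valo, valt]
  rw [show (((1:ℝ)/3 : ℝ) : ℂ) = 1/3 by push_cast; ring]
  linear_combination (((-1/3) + (1/3)*xi^3 + (-1/3)*xi^9 + (1/3)*xi^12 + (-1/3)*xi^18 + (1/3)*xi^21 + (-1/3)*xi^27 + (1/3)*xi^30 + (1/9)*xi^35 + (-1/3)*xi^36 + (-1/9)*xi^38 + (1/3)*xi^39 + (1/9)*xi^44 + (-1/3)*xi^45 + (-1/9)*xi^47 + (1/3)*xi^48 + (1/9)*xi^53 + (-2/9)*xi^54 + (-1/9)*xi^56 + (2/9)*xi^57 + (1/9)*xi^62 + (-2/9)*xi^63 + (-1/9)*xi^65 + (2/9)*xi^66 + (1/9)*xi^67 + (-1/9)*xi^70 + (1/9)*xi^71 + (-1/9)*xi^72 + (1/9)*xi^75 + (1/9)*xi^76 + (-1/9)*xi^77 + (1/9)*xi^80 + (-1/9)*xi^82 + (1/9)*xi^85)) * hxc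

lemma wigV10 : wig 3 Vopt (1, 0) = 0 := by
  rw [wig10]
  simp (config := { decide := true }) only [Vopt_entry, nu, nuc, if_true, if_false, valz, valo, valt]
  linear_combination (((1/9)*xi^2 + (-1/9)*xi^5 + (1/9)*xi^7 + (1/9)*xi^9 + (-1/9)*xi^10 + (1/9)*xi^11 + (-1/9)*xi^12 + (-1/9)*xi^14 + (1/9)*xi^16 + (1/9)*xi^18 + (-1/9)*xi^19 + (1/9)*xi^20 + (-1/9)*xi^21 + (-1/9)*xi^23 + (1/9)*xi^25 + (1/9)*xi^27 + (-1/9)*xi^28 + (1/9)*xi^29 + (-1/9)*xi^30 + (1/9)*xi^31 + (-1/9)*xi^32 + (1/9)*xi^36 + (-1/9)*xi^37 + (1/9)*xi^38 + (-1/9)*xi^39 + (1/9)*xi^40 + (-1/9)*xi^41 + (1/9)*xi^45 + (-1/9)*xi^46 + (1/9)*xi^47 + (-1/9)*xi^48 + (1/9)*xi^49 + (-1/9)*xi^50 + (1/9)*xi^54 + (-1/9)*xi^55 + (1/9)*xi^56 + (-1/9)*xi^57 + (1/9)*xi^58 + (-1/9)*xi^62 + (1/9)*xi^63 + (-1/9)*xi^64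 + (1/9)*xi^65 + (1/9)*xi^67 + (-1/9)*xi^69 + (1/9)*xi^72)) * hxc

lemma wigV12 : wig 3 Vopt (1, 2) = 0 := by
  rw [wig12]
  simp (config := { decide := true }) only [Vopt_entry, nu, nuc, if_true, if_false, valz, valo, valt]
  linear_combination (((1/9)*xi^58 + (-1/9)*xi^61 + (1/9)*xi^67 + (-1/9)*xi^70 + (1/9)*xi^75 + (1/9)*xi^76 + (-1/9)*xi^78 + (-1/9)*xi^79 + (1/9)*xi^80 + (1/9)*xi^82 + (-1/9)*xi^83 + (1/9)*xi^84 + (1/9)*xi^86 + (-1/9)*xi^88 + (-1/9)*xi^90 + (1/9)*xi^91 + (-1/9)*xi^92 + (1/9)*xi^93 + (1/9)*xi^95 + (-1/9)*xi^97 + (-1/9)*xi^99 + (1/9)*xi^100 + (-1/9)*xi^101 + (1/9)*xi^102 + (1/9)*xi^104 + (-1/9)*xi^106 + (-1/9)*xi^108 + (1/9)*xi^109 + (-1/9)*xi^110 + (1/9)*xi^111 + (1/9)*xi^113 + (-1/9)*xi^115 + (1/9)*xi^118 + (-1/9)*xi^119 + (1/9)*xi^122 + (-1/9)*xi^124 +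 (1/9)*xi^127 + (-1/9)*xi^128 + (1/9)*xi^131 + (-1/9)*xi^133 + (1/9)*xi^136 + (-1/9)*xi^137 + (1/9)*xi^140 + (-1/9)*xi^142 + (1/9)*xi^145)) * hxc

lemma wigV21 : wig 3 Vopt (2, 1) = 0 := by
  rw [wig21]
  simp (config := { decide := true }) only [Vopt_entry, nu, nuc, if_true, if_false, valz, valo, valt]
  linear_combination (((1/9)*xi^68 + (-1/9)*xi^71 + (1/9)*xi^77 + (-1/9)*xi^80 + (1/9)*xi^86 + (-1/9)*xi^89 + (1/9)*xi^95 + (-1/9)*xi^98 + (1/9)*xi^100 + (-1/9)*xi^103 + (1/9)*xi^104 + (1/9)*xi^105 + (-1/9)*xi^107 + (1/9)*xi^109 + (-1/9)*xi^111 + (-1/9)*xi^112 + (1/9)*xi^113 + (1/9)*xi^114 + (-1/9)*xi^116 + (1/9)*xi^118 + (-1/9)*xi^120 + (-1/9)*xi^121 + (1/9)*xi^122 + (1/9)*xi^123 + (-1/9)*xi^125 + (1/9)*xi^127 + (1/9)*xi^128 + (-1/9)*xi^129 + (-1/9)*xi^130 + (1/9)*xi^132 + (1/9)*xi^133 + (-1/9)*xi^134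 + (1/9)*xi^137 + (-1/9)*xi^138 + (-1/9)*xi^139 + (1/9)*xi^141 + (1/9)*xi^142 + (-1/9)*xi^143 + (1/9)*xi^146 + (-1/9)*xi^147 + (-1/9)*xi^148 + (1/9)*xi^150 + (1/9)*xi^151 + (-1/9)*xi^152 + (1/9)*xi^155 + (-1/9)*xi^157 + (1/9)*xi^160)) * hxc

lemma wigV01 : wig 3 Vopt (0, 1) = ((c2d/3 : ℝ) : ℂ) := by
  rw [wig01]
  simp (config := { decide := true }) only [Vopt_entry, nu, nuc, if_true, if_false, valz, valo, valt]
  rw [show ((c2d/3 : ℝ) : ℂ) = (xi^2 + xi^7)/3 by rw [Complex.ofReal_div, hc2C]; norm_num]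
  linear_combination (((1/9) + (-2/9)*xi^2 + (-1/9)*xi^3 + (2/9)*xi^5 + (1/9)*xi^6 + (-1/3)*xi^7 + (1/3)*xi^10 + (-1/9)*xi^11 + (-1/9)*xi^12 + (1/9)*xi^14 + (1/9)*xi^15 + (-2/9)*xi^16 + (2/9)*xi^19 + (-1/9)*xi^21 + (1/9)*xi^24 + (-1/9)*xi^25 + (1/9)*xi^28 + (-1/9)*xi^30 + (1/9)*xi^33)) * hxc

lemma wigV20 : wig 3 Vopt (2, 0) = ((c2d/3 : ℝ) : ℂ) := by
  rw [wig20]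
  simp (config := { decide := true }) only [Vopt_entry, nu, nuc, if_true, if_false, valz, valo, valt]
  rw [show ((c2d/3 : ℝ) : ℂ) = (xi^2 + xi^7)/3 by rw [Complex.ofReal_div, hc2C]; norm_num]
  linear_combination (((-2/9)*xi^2 + (2/9)*xi^5 + (-2/9)*xi^7 + (1/9)*xi^9 + (2/9)*xi^10 + (-2/9)*xi^11 + (-1/9)*xi^12 + (2/9)*xi^14 + (-2/9)*xi^16 + (1/9)*xi^18 + (2/9)*xi^19 + (-2/9)*xi^20 + (-1/9)*xi^21 + (2/9)*xi^23 + (-2/9)*xi^25 + (1/9)*xi^27 + (2/9)*xi^28 + (-2/9)*xi^29 + (-1/9)*xi^30 + (2/9)*xi^32 + (-2/9)*xi^34 + (1/9)*xi^36 + (2/9)*xi^37 + (-2/9)*xi^38 + (-1/9)*xi^39 + (2/9)*xi^41 + (-2/9)*xi^43 + (1/9)*xi^45 + (2/9)*xi^46 + (-2/9)*xi^47 + (-1/9)*xi^48 + (2/9)*xi^50 + (-2/9)*xi^52 + (1/9)*xi^54 + (2/9)*xi^55 + (-2/9)*xi^56 + (-1/9)*xi^57 + (2/9)*xi^59 + (-1/9)*xi^61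 + (1/9)*xi^63 + (1/9)*xi^64 + (-2/9)*xi^65 + (-1/9)*xi^66 + (2/9)*xi^68 + (-1/9)*xi^70 + (1/9)*xi^72 + (1/9)*xi^73 + (-2/9)*xi^74 + (-1/9)*xi^75 + (2/9)*xi^77 + (-1/9)*xi^79 + (1/9)*xi^81 + (1/9)*xi^82 + (-2/9)*xi^83 + (-1/9)*xi^84 + (2/9)*xi^86 + (-1/9)*xi^88 + (1/9)*xi^90 + (1/9)*xi^91 + (-2/9)*xi^92 + (-1/9)*xi^93 + (2/9)*xi^95 + (1/9)*xi^96 + (-1/9)*xi^97 + (1/9)*xi^100 + (-1/9)*xi^101 + (-1/9)*xi^102 + (1/9)*xi^104 + (1/9)*xi^105 + (-1/9)*xi^106 + (1/9)*xi^109 + (-1/9)*xi^111 + (1/9)*xi^114 + (-1/9)*xi^115 + (1/9)*xi^118 + (-1/9)*xi^120 + (1/9)*xi^123)) * hxc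

lemma wigV22 : wig 3 Vopt (2, 2) = ((c2d/3 : ℝ) : ℂ) := by
  rw [wig22]
  simp (config := { decide := true }) only [Vopt_entry, nu, nuc, if_true, if_false, valz, valo, valt]
  rw [show ((c2d/3 : ℝ) : ℂ) = (xi^2 + xi^7)/3 by rw [Complex.ofReal_div, hc2C]; norm_num]
  linear_combination (((-1/3)*xi^2 + (1/3)*xi^5 + (-1/3)*xi^7 + (1/3)*xi^10 + (-1/3)*xi^11 + (1/3)*xi^14 + (-1/3)*xi^16 + (1/3)*xi^19 + (-1/3)*xi^20 + (1/3)*xi^23 + (-1/3)*xi^25 + (1/3)*xi^28 + (-1/3)*xi^29 + (1/3)*xi^32 + (-1/3)*xi^34 + (1/3)*xi^37 + (-1/3)*xi^38 + (1/3)*xi^41 + (-1/3)*xi^43 + (1/3)*xi^46 + (-1/3)*xi^47 + (1/3)*xi^50 + (-1/3)*xi^52 + (1/3)*xi^55 + (-1/3)*xi^56 + (1/3)*xi^59 + (-1/3)*xi^61 + (1/3)*xi^64 + (-1/3)*xi^65 + (1/3)*xi^68 + (-1/3)*xi^70 + (1/3)*xi^73 + (-1/3)*xi^74 + (1/3)*xi^77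 + (-1/3)*xi^79 + (1/3)*xi^82 + (-1/3)*xi^83 + (1/3)*xi^86 + (-1/3)*xi^88 + (1/3)*xi^91 + (-1/3)*xi^92 + (1/3)*xi^95 + (-1/3)*xi^97 + (1/3)*xi^100 + (-1/3)*xi^101 + (1/3)*xi^104 + (-1/3)*xi^106 + (1/3)*xi^109 + (-1/3)*xi^110 + (1/3)*xi^113 + (-2/9)*xi^115 + (2/9)*xi^118 + (-1/3)*xi^119 + (1/3)*xi^122 + (-2/9)*xi^124 + (2/9)*xi^127 + (-1/3)*xi^128 + (1/3)*xi^131 + (1/9)*xi^132 + (-2/9)*xi^133 + (-1/9)*xi^135 + (2/9)*xi^136 + (-2/9)*xi^137 + (2/9)*xi^140 + (1/9)*xi^141 + (-2/9)*xi^142 + (-1/9)*xi^144 + (2/9)*xi^145 + (-2/9)*xi^146 + (2/9)*xi^149 + (1/9)*xi^150 + (-2/9)*xi^151 + (-1/9)*xi^153 + (2/9)*xi^154 + (-2/9)*xi^155 + (2/9)*xi^158 + (1/9)*xi^159 + (-1/9)*xi^160 + (-1/9)*xi^162 + (1/9)*xi^163 + (-1/9)*xi^164 + (1/9)*xi^165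 + (1/9)*xi^167 + (-1/9)*xi^169 + (-1/9)*xi^171 + (1/9)*xi^172 + (-1/9)*xi^173 + (1/9)*xi^174 + (1/9)*xi^176 + (-1/9)*xi^178 + (-1/9)*xi^180 + (1/9)*xi^181 + (-1/9)*xi^182 + (1/9)*xi^183 + (1/9)*xi^185 + (-1/9)*xi^187 + (-1/9)*xi^189 + (1/9)*xi^190 + (-1/9)*xi^191 + (1/9)*xi^192 + (1/9)*xi^194 + (-1/9)*xi^196 + (-1/9)*xi^198 + (1/9)*xi^199 + (-1/9)*xi^200 + (1/9)*xi^201 + (1/9)*xi^203 + (-1/9)*xi^205 + (-1/9)*xi^207 + (1/9)*xi^208 + (-1/9)*xi^209 + (1/9)*xi^210 + (1/9)*xi^212 + (-1/9)*xi^214 + (-1/9)*xi^216 + (1/9)*xi^217 + (-1/9)*xi^218 + (1/9)*xi^219 + (1/9)*xi^221 + (-1/9)*xi^223 + (1/9)*xi^226 + (-1/9)*xi^227 + (1/9)*xi^230 + (-1/9)*xi^232 + (1/9)*xi^235 + (-1/9)*xi^236 + (1/9)*xi^239 + (-1/9)*xi^241 + (1/9)*xi^244 + (-1/9)*xi^245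 + (1/9)*xi^248 + (-1/9)*xi^250 + (1/9)*xi^253)) * hxc

lemma star_identity (V : Matrix (ZMod 3) (ZMod 3) ℂ) :
    wig 3 V (0, 0) + wig 3 V (0, 1) + wig 3 V (0, 2) + ((yD:ℝ):ℂ) * wig 3 V (1, 0) + wig 3 V (1, 1) + ((yD:ℝ):ℂ) * wig 3 V (1, 2) + wig 3 V (2, 0) + ((yD:ℝ):ℂ) * wig 3 V (2, 1) + wig 3 V (2, 2)
      = ((mu1:ℝ):ℂ) * (star pvec ⬝ᵥ V *ᵥ pvec) + ((mu2:ℝ):ℂ) * (star qvec ⬝ᵥ V *ᵥ qvec) := by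
  rw [wig00, wig01, wig02, wig10, wig11, wig12, wig20, wig21, wig22, hyC, hmu1C, hmu2C]
  simp only [dotProduct, Matrix.mulVec, pvec, qvec, Pi.star_apply, Complex.star_def,
    sumZ3, map_pow, conj_xi, valz, valo, valt]
  norm_num
  linear_combination (((1/3) + (-1/3)*xi^3 + (-2/3)*xi^5 + (1/3)*xi^6 + (1/3)*xi^8 + (-1/3)*xi^10 + (1/3)*xi^11 + (-1/3)*xi^12 + (2/3)*xi^13 + (-2/3)*xi^14 + (-1/3)*xi^16 + (1/3)*xi^17 + (1/3)*xi^18 + (-1/3)*xi^19 + (1/3)*xi^20 + (-1/3)*xi^21 + (2/3)*xi^22 + (-2/3)*xi^23 + (-1/3)*xi^25 + (1/3)*xi^26 + (1/3)*xi^27 + (-1/3)*xi^28 + (1/3)*xi^29 + (-1/3)*xi^30 + (2/3)*xi^31 + (-2/3)*xi^32 + (-1/3)*xi^34 + (1/3)*xi^35 + (1/3)*xi^36 + (-1/3)*xi^37 + (1/3)*xi^38 + (-1/3)*xi^39 + (2/3)*xi^40 + (-2/3)*xi^41 + (-1/3)*xi^43 + (1/3)*xi^44 + (1/3)*xi^45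 + (-1/3)*xi^46 + (1/3)*xi^47 + (-1/3)*xi^48 + (2/3)*xi^49 + (-2/3)*xi^50 + (-1/3)*xi^52 + (1/3)*xi^53 + (1/3)*xi^54 + (-1/3)*xi^55 + (1/3)*xi^56 + (1/3)*xi^58 + (-1/3)*xi^59 + (-1/3)*xi^60 + (1/3)*xi^63 + (-1/3)*xi^69 + (1/3)*xi^72 + (-1/3)*xi^78 + (1/3)*xi^81 + (-1/3)*xi^87 + (1/3)*xi^90 + (-1/3)*xi^96 + (1/3)*xi^99 + (-1/3)*xi^105 + (1/3)*xi^108) * V 0 1 + ((1/3) + (-1/3)*xi^3 + (1/3)*xi^9 + (-2/3)*xi^10 + (1/3)*xi^11 + (-1/3)*xi^12 + (2/3)*xi^13 + (-1/3)*xi^14 + (-1/3)*xi^16 + (1/3)*xi^18 + (-1/3)*xi^19 + (1/3)*xi^20 + (-1/3)*xi^21 + (2/3)*xi^22 + (-2/3)*xi^23 + (-1/3)*xi^25 + (1/3)*xi^26 + (1/3)*xi^27 + (-1/3)*xi^28 + (1/3)*xi^29 + (-1/3)*xi^30 + (2/3)*xi^31 + (-2/3)*xi^32 + (1/3)*xi^33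 + (-1/3)*xi^34 + (1/3)*xi^35 + (-1/3)*xi^37 + (1/3)*xi^38 + (-1/3)*xi^39 + (2/3)*xi^40 + (-2/3)*xi^41 + (1/3)*xi^42 + (-1/3)*xi^43 + (1/3)*xi^44 + (-1/3)*xi^46 + (1/3)*xi^47 + (-1/3)*xi^48 + (2/3)*xi^49 + (-2/3)*xi^50 + (1/3)*xi^51 + (-1/3)*xi^52 + (1/3)*xi^53 + (-1/3)*xi^55 + (1/3)*xi^56 + (-1/3)*xi^57 + (2/3)*xi^58 + (-2/3)*xi^59 + (1/3)*xi^60 + (-1/3)*xi^61 + (1/3)*xi^62 + (-1/3)*xi^64 + (1/3)*xi^65 + (1/3)*xi^67 + (-1/3)*xi^68) * V 0 2 + ((1/3) + (-1/3)*xi^3 + (1/3)*xi^9 + (-1/3)*xi^12 + (1/3)*xi^18 + (-1/3)*xi^21 + (1/3)*xi^27 + (-1/3)*xi^30 + (1/3)*xi^36 + (-1/3)*xi^39 + (-2/3)*xi^40 + (1/3)*xi^41 + (2/3)*xi^43 + (-1/3)*xi^44 + (1/3)*xi^45 + (-2/3)*xi^49 + (1/3)*xi^50 + (-1/3)*xi^51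 + (2/3)*xi^52 + (-1/3)*xi^53 + (1/3)*xi^54 + (-2/3)*xi^58 + (1/3)*xi^59 + (-1/3)*xi^60 + (2/3)*xi^61 + (-1/3)*xi^62 + (1/3)*xi^63 + (-1/3)*xi^64 + (-1/3)*xi^66 + (-1/3)*xi^67 + (1/3)*xi^68 + (2/3)*xi^70 + (-2/3)*xi^71 + (1/3)*xi^72 + (-1/3)*xi^73 + (1/3)*xi^74 + (-1/3)*xi^75 + (-1/3)*xi^76 + (1/3)*xi^77 + (1/3)*xi^78 + (1/3)*xi^79 + (-1/3)*xi^80 + (-1/3)*xi^84 + (1/3)*xi^87 + (-1/3)*xi^93 + (1/3)*xi^96 + (-1/3)*xi^102 + (1/3)*xi^105 + (-1/3)*xi^111 + (1/3)*xi^114 + (-1/3)*xi^120 + (1/3)*xi^123 + (-1/3)*xi^129 + (1/3)*xi^132 + (-1/3)*xi^138 + (1/3)*xi^141 + (-1/3)*xi^147 + (1/3)*xi^150) * V 1 0 + ((1/3) + (-1/3)*xi^3 + (1/3)*xi^9 + (-1/3)*xi^12 + (1/3)*xi^18 + (-1/3)*xi^21 + (1/3)*xi^27 + (-1/3)*xi^30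 + (1/3)*xi^36 + (-1/3)*xi^39 + (-1/3)*xi^45 + (1/3)*xi^46 + (1/3)*xi^48 + (-1/3)*xi^49 + (1/3)*xi^53 + (1/3)*xi^55 + (-1/3)*xi^56 + (-1/3)*xi^58 + (1/3)*xi^62 + (1/3)*xi^64 + (-1/3)*xi^65 + (-1/3)*xi^67 + (1/3)*xi^71 + (-1/3)*xi^72 + (1/3)*xi^73 + (-2/3)*xi^74 + (1/3)*xi^75 + (-1/3)*xi^76 + (1/3)*xi^77 + (-1/3)*xi^79 + (1/3)*xi^80 + (-1/3)*xi^81 + (2/3)*xi^82 + (-2/3)*xi^83 + (1/3)*xi^84 + (-1/3)*xi^85 + (1/3)*xi^86 + (-1/3)*xi^88 + (1/3)*xi^89 + (-1/3)*xi^90 + (2/3)*xi^91 + (-2/3)*xi^92 + (1/3)*xi^93 + (-1/3)*xi^94 + (1/3)*xi^95 + (-1/3)*xi^97 + (1/3)*xi^98 + (-1/3)*xi^99 + (2/3)*xi^100 + (-2/3)*xi^101 + (1/3)*xi^102 + (-1/3)*xi^103 + (1/3)*xi^104 + (-1/3)*xi^106 + (1/3)*xi^107 + (1/3)*xi^109 +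 (-1/3)*xi^110) * V 1 1 + ((1/3) + (-1/3)*xi^3 + (1/3)*xi^9 + (-1/3)*xi^12 + (1/3)*xi^18 + (-1/3)*xi^21 + (1/3)*xi^27 + (-1/3)*xi^31 + (1/3)*xi^32 + (-1/3)*xi^33 + (1/3)*xi^34 + (-1/3)*xi^35 + (1/3)*xi^36 + (1/3)*xi^37 + (-1/3)*xi^38 + (-2/3)*xi^40 + (2/3)*xi^41 + (-1/3)*xi^42 + (1/3)*xi^43 + (-1/3)*xi^44 + (1/3)*xi^45 + (1/3)*xi^46 + (-1/3)*xi^47 + (-2/3)*xi^49 + (1/3)*xi^52 + (1/3)*xi^53 + (1/3)*xi^55 + (-1/3)*xi^56 + (-1/3)*xi^58 + (1/3)*xi^60 + (1/3)*xi^62 + (-1/3)*xi^63 + (1/3)*xi^64 + (-1/3)*xi^65 + (-1/3)*xi^67 + (1/3)*xi^69 + (1/3)*xi^71 + (-1/3)*xi^72 + (1/3)*xi^73 + (-1/3)*xi^74 + (-1/3)*xi^76 + (1/3)*xi^78 + (-1/3)*xi^81) * V 1 2 + ((1/3) + (-1/3)*xi^3 + (1/3)*xi^9 + (-1/3)*xi^12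 + (1/3)*xi^18 + (-1/3)*xi^21 + (1/3)*xi^27 + (-1/3)*xi^30 + (1/3)*xi^36 + (-1/3)*xi^39 + (1/3)*xi^45 + (-1/3)*xi^48 + (1/3)*xi^54 + (-1/3)*xi^57 + (1/3)*xi^63 + (-1/3)*xi^66 + (1/3)*xi^72 + (-1/3)*xi^78 + (-2/3)*xi^80 + (2/3)*xi^81 + (2/3)*xi^83 + (-1/3)*xi^84 + (-1/3)*xi^87 + (1/3)*xi^88 + (-2/3)*xi^89 + (2/3)*xi^90 + (-1/3)*xi^91 + (2/3)*xi^92 + (-1/3)*xi^93 + (-1/3)*xi^96 + (1/3)*xi^97 + (-2/3)*xi^98 + (2/3)*xi^99 + (-1/3)*xi^100 + (2/3)*xi^101 + (-1/3)*xi^102 + (-1/3)*xi^105 + (1/3)*xi^106 + (-2/3)*xi^107 + (2/3)*xi^108 + (-1/3)*xi^109 + (2/3)*xi^110 + (-1/3)*xi^111 + (-1/3)*xi^114 + (1/3)*xi^115 + (-2/3)*xi^116 + (2/3)*xi^117 + (-1/3)*xi^118 + (2/3)*xi^119 + (-1/3)*xi^120 + (-1/3)*xi^123 + (1/3)*xi^124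 + (-2/3)*xi^125 + (2/3)*xi^126 + (-1/3)*xi^127 + (1/3)*xi^128 + (-1/3)*xi^129 + (-1/3)*xi^130 + (1/3)*xi^131 + (-1/3)*xi^132 + (2/3)*xi^133 + (-2/3)*xi^134 + (1/3)*xi^135 + (-1/3)*xi^136 + (1/3)*xi^137 + (-1/3)*xi^139 + (1/3)*xi^140 + (-1/3)*xi^141 + (2/3)*xi^142 + (-2/3)*xi^143 + (1/3)*xi^144 + (-1/3)*xi^145 + (1/3)*xi^146 + (-1/3)*xi^148 + (1/3)*xi^149 + (1/3)*xi^151 + (-1/3)*xi^152) * V 2 0 + ((1/3) + (-1/3)*xi^3 + (1/3)*xi^9 + (-1/3)*xi^12 + (1/3)*xi^18 + (-1/3)*xi^21 + (1/3)*xi^27 + (-1/3)*xi^30 + (1/3)*xi^36 + (-1/3)*xi^39 + (1/3)*xi^45 + (-1/3)*xi^48 + (1/3)*xi^51 + (-1/3)*xi^52 + (1/3)*xi^53 + (1/3)*xi^55 + (-1/3)*xi^56 + (-1/3)*xi^57 + (1/3)*xi^58 + (-1/3)*xi^59 + (1/3)*xi^60 + (-2/3)*xi^61 + (2/3)*xi^62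 + (1/3)*xi^64 + (-1/3)*xi^65 + (-1/3)*xi^66 + (1/3)*xi^67 + (-1/3)*xi^68 + (1/3)*xi^69 + (-2/3)*xi^70 + (2/3)*xi^71 + (1/3)*xi^73 + (-1/3)*xi^74 + (-1/3)*xi^75 + (1/3)*xi^76 + (-1/3)*xi^77 + (1/3)*xi^78 + (-2/3)*xi^79 + (2/3)*xi^80 + (1/3)*xi^82 + (-1/3)*xi^83 + (-1/3)*xi^84 + (-1/3)*xi^85 + (1/3)*xi^87 + (1/3)*xi^89 + (1/3)*xi^91 + (-1/3)*xi^92 + (-1/3)*xi^94 + (1/3)*xi^98 + (1/3)*xi^100 + (-1/3)*xi^101 + (1/3)*xi^102 + (-1/3)*xi^103 + (-1/3)*xi^105 + (1/3)*xi^107 + (1/3)*xi^109 + (-1/3)*xi^110 + (1/3)*xi^111 + (-1/3)*xi^112 + (-1/3)*xi^114 + (1/3)*xi^116 + (1/3)*xi^118 + (-1/3)*xi^119 + (1/3)*xi^120 + (-1/3)*xi^121 + (-1/3)*xi^123 + (1/3)*xi^125 + (1/3)*xi^127 + (-1/3)*xi^128 + (1/3)*xi^129 + (-1/3)*xi^130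 + (-1/3)*xi^132 + (1/3)*xi^134 + (-1/3)*xi^137) * V 2 1 + ((1/3) + (-1/3)*xi^3 + (1/3)*xi^9 + (-1/3)*xi^12 + (1/3)*xi^18 + (-1/3)*xi^21 + (1/3)*xi^27 + (-1/3)*xi^30 + (1/3)*xi^36 + (-1/3)*xi^39 + (1/3)*xi^45 + (-1/3)*xi^48 + (1/3)*xi^54 + (-1/3)*xi^57 + (1/3)*xi^63 + (-1/3)*xi^66 + (1/3)*xi^72 + (-1/3)*xi^75 + (1/3)*xi^81 + (-1/3)*xi^84 + (-1/3)*xi^90 + (1/3)*xi^91 + (1/3)*xi^93 + (-1/3)*xi^94 + (1/3)*xi^98 + (-1/3)*xi^99 + (1/3)*xi^100 + (-1/3)*xi^101 + (1/3)*xi^102 + (-1/3)*xi^103 + (1/3)*xi^107 + (-1/3)*xi^113 + (1/3)*xi^115 + (-1/3)*xi^118 + (1/3)*xi^119 + (-1/3)*xi^122 + (1/3)*xi^124 + (-1/3)*xi^127 + (1/3)*xi^128 + (-1/3)*xi^131 + (1/3)*xi^133 + (-1/3)*xi^136 + (1/3)*xi^137 + (-1/3)*xi^140 + (1/3)*xi^142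 + (-1/3)*xi^144 + (-1/3)*xi^145 + (1/3)*xi^147 + (-1/3)*xi^153 + (1/3)*xi^156 + (-1/3)*xi^162 + (1/3)*xi^165 + (-1/3)*xi^171 + (1/3)*xi^174 + (-1/3)*xi^180 + (1/3)*xi^183 + (-1/3)*xi^189 + (1/3)*xi^192 + (-1/3)*xi^198 + (1/3)*xi^201 + (-1/3)*xi^207 + (1/3)*xi^210) * V 2 2) * hxc

lemma dagger : ((mu1:ℝ):ℂ) * (star pvec ⬝ᵥ (projOf tket) *ᵥ pvec) + ((mu2:ℝ):ℂ) * (star qvec ⬝ᵥ (projOf tket) *ᵥ qvec)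
    = (((1:ℝ) + c2d : ℝ) : ℂ) := by
  rw [hmu1C, hmu2C]
  simp (config := { decide := true }) only [dotProduct, Matrix.mulVec, pvec, qvec,
    Pi.star_apply, Complex.star_def, sumZ3, map_pow, conj_xi, valz, valo, valt, tkentry, nu, nuc]
  rw [show (((1:ℝ) + c2d : ℝ) : ℂ) = 1 + (xi^2 + xi^7) by push_cast [hc2C]; ring]
  norm_num
  linear_combination ((-1 + -1*xi^2 + xi^3 + xi^5 + (2/9)*xi^6 + (-10/9)*xi^7 + (-7/9)*xi^9 + xi^10 + (-7/9)*xi^11 + (7/9)*xi^12 + (2/3)*xi^14 + (-7/9)*xi^16 + (-2/3)*xi^18 + (7/9)*xi^19 + (-2/3)*xi^20 + (2/3)*xi^21 + (2/3)*xi^23 + (-2/3)*xi^25 + (-2/3)*xi^27 + (2/3)*xi^28 + (-2/3)*xi^29 + (2/3)*xi^30 + (2/3)*xi^32 + (-2/3)*xi^34 + (-2/3)*xi^36 + (2/3)*xi^37 + (-2/3)*xi^38 + (2/3)*xi^39 + (2/3)*xi^41 + (-2/3)*xi^43 + (-4/9)*xi^45 + (5/9)*xi^46 + (-2/3)*xi^47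 + (2/3)*xi^48 + (2/3)*xi^50 + (-2/3)*xi^52 + (-1/9)*xi^53 + (-2/3)*xi^54 + (2/3)*xi^55 + (-2/3)*xi^56 + (2/3)*xi^57 + (2/3)*xi^59 + (-2/3)*xi^61 + (-2/3)*xi^63 + (2/3)*xi^64 + (-2/3)*xi^65 + (2/3)*xi^66 + (2/3)*xi^68 + (-2/3)*xi^70 + (-4/9)*xi^72 + (2/3)*xi^73 + (-4/9)*xi^74 + (4/9)*xi^75 + (4/9)*xi^77 + (-4/9)*xi^79 + (-1/3)*xi^81 + (4/9)*xi^82 + (-1/3)*xi^83 + (1/3)*xi^84 + (1/3)*xi^86 + (-1/3)*xi^88 + (-1/3)*xi^90 + (1/3)*xi^91 + (-1/3)*xi^92 + (5/9)*xi^93 + (-1/9)*xi^94 + (1/3)*xi^95 + (-1/3)*xi^97 + (-1/3)*xi^99 + (1/3)*xi^100 + (-4/9)*xi^101 + (1/3)*xi^102 + (1/3)*xi^104 + (-1/3)*xi^106 + (-1/3)*xi^108 + (1/3)*xi^109 + (-1/3)*xi^110 + (1/3)*xi^111 + (1/3)*xi^113 + (-1/3)*xi^115 + (-1/3)*xi^117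 + (1/3)*xi^118 + (-1/3)*xi^119 + (1/3)*xi^120 + (1/3)*xi^122 + (-1/3)*xi^124 + (-1/3)*xi^126 + (1/3)*xi^127 + (-1/3)*xi^128 + (1/3)*xi^129 + (1/3)*xi^131 + (-1/3)*xi^133 + (-1/3)*xi^135 + (1/3)*xi^136 + (-1/3)*xi^137 + (1/3)*xi^138 + (1/3)*xi^140 + (-1/3)*xi^142 + (-1/9)*xi^144 + (1/3)*xi^145 + (-1/9)*xi^146 + (1/9)*xi^147 + (1/9)*xi^149 + (-1/9)*xi^151 + (1/9)*xi^154)) * hxc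


-- the target value identity
lemma htarget : 1 + 2*Real.sin (Real.pi/18) = 1 + c2d := by
  rw [c2d, show 4*Real.pi/9 = Real.pi/2 - Real.pi/18 by ring, Real.cos_pi_div_two_sub]

-- Hermitian / PSD facts
lemma projOf_herm (ψ : ZMod 3 → ℂ) : (projOf ψ).IsHermitian := by
  ext i j
  simp [projOf, Matrix.conjTranspose_apply, Matrix.vecMulVec_apply, mul_comm]

lemma projOf_psd (ψ : ZMod 3 → ℂ) : (projOf ψ).PosSemidef := by
  refine .of_dotProduct_mulVec_nonneg (projOf_herm ψ) fun x => ?_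
  have key : star x ⬝ᵥ (projOf ψ) *ᵥ x = (star x ⬝ᵥ ψ) * (starRingEnd ℂ) (star x ⬝ᵥ ψ) := by
    simp only [dotProduct, Matrix.mulVec, projOf, Matrix.vecMulVec_apply, Pi.star_apply,
      Complex.star_def, sumZ3, map_add, _root_.map_mul, Complex.conj_conj]
    ring
  rw [key, Complex.mul_conj]
  exact Complex.zero_le_real.mpr (Complex.normSq_nonneg _)

lemma remul (r : ℝ) (z : ℂ) : (((r:ℝ):ℂ) * z).re = r * z.re := by
  simp [Complex.mul_re]

lemma yterm (z : ℂ) : (((yD:ℝ):ℂ) * z).re ≤ ‖z‖ := by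
  rw [remul]
  calc yD * z.re ≤ |yD * z.re| := le_abs_self _
    _ = |yD| * |z.re| := abs_mul _ _
    _ ≤ 1 * ‖z‖ :=
        mul_le_mul abs_yD (Complex.abs_re_le_norm z) (abs_nonneg _) (by norm_num)
    _ = ‖z‖ := one_mul _

lemma wnorm1_Vopt : wnorm1 3 Vopt = 1 + c2d := by
  rw [wnorm1, Fintype.sum_prod_type, sumZ3]
  rw [sumZ3 (fun y => ‖wig 3 Vopt ((0:ZMod 3), y)‖),
      sumZ3 (fun y => ‖wig 3 Vopt ((1:ZMod 3), y)‖),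
      sumZ3 (fun y => ‖wig 3 Vopt ((2:ZMod 3), y)‖)]
  rw [wigV00, wigV01, wigV02, wigV10, wigV11, wigV12, wigV20, wigV21, wigV22]
  simp only [Complex.norm_real, Real.norm_eq_abs, norm_zero]
  rw [_root_.abs_of_nonneg (show (0:ℝ) ≤ 1/3 by norm_num),
      _root_.abs_of_nonneg (div_nonneg nonneg_c2d (by norm_num : (0:ℝ) ≤ 3))]
  ring

lemma lower_bound (V : Matrix (ZMod 3) (ZMod 3) ℂ)
    (hpsd : (V - projOf tket).PosSemidef) : 1 + c2d ≤ wnorm1 3 V := by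
  have hp : 0 ≤ (star pvec ⬝ᵥ (V - projOf tket) *ᵥ pvec).re := by
    have h := (Complex.le_def.mp (hpsd.dotProduct_mulVec_nonneg pvec)).1
    simpa using h
  have hq : 0 ≤ (star qvec ⬝ᵥ (V - projOf tket) *ᵥ qvec).re := by
    have h := (Complex.le_def.mp (hpsd.dotProduct_mulVec_nonneg qvec)).1
    simpa using h
  rw [Matrix.sub_mulVec, dotProduct_sub, Complex.sub_re, sub_nonneg] at hp hq
  have hstar := star_identity V
  have hL : ((wig 3 V (0, 0) + wig 3 V (0, 1) + wig 3 V (0, 2) + ((yD:ℝ):ℂ) * wig 3 V (1, 0) +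
      wig 3 V (1, 1) + ((yD:ℝ):ℂ) * wig 3 V (1, 2) + wig 3 V (2, 0) + ((yD:ℝ):ℂ) * wig 3 V (2, 1) +
      wig 3 V (2, 2)).re : ℝ) ≤ wnorm1 3 V := by
    rw [wnorm1, Fintype.sum_prod_type, sumZ3]
    rw [sumZ3 (fun y => ‖wig 3 V ((0:ZMod 3), y)‖),
        sumZ3 (fun y => ‖wig 3 V ((1:ZMod 3), y)‖),
        sumZ3 (fun y => ‖wig 3 V ((2:ZMod 3), y)‖)]
    simp only [Complex.add_re]
    have r1 := Complex.re_le_norm (wig 3 V (0,0))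
    have r2 := Complex.re_le_norm (wig 3 V (0,1))
    have r3 := Complex.re_le_norm (wig 3 V (0,2))
    have r4 := yterm (wig 3 V (1,0))
    have r5 := Complex.re_le_norm (wig 3 V (1,1))
    have r6 := yterm (wig 3 V (1,2))
    have r7 := Complex.re_le_norm (wig 3 V (2,0))
    have r8 := yterm (wig 3 V (2,1))
    have r9 := Complex.re_le_norm (wig 3 V (2,2))
    linarith
  rw [hstar] at hL
  have hR : (((mu1:ℝ):ℂ) * (star pvec ⬝ᵥ V *ᵥ pvec) + ((mu2:ℝ):ℂ) * (star qvec ⬝ᵥ V *ᵥ qvec)).re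
      = mu1 * (star pvec ⬝ᵥ V *ᵥ pvec).re + mu2 * (star qvec ⬝ᵥ V *ᵥ qvec).re := by
    rw [Complex.add_re, remul, remul]
  have hD : mu1 * (star pvec ⬝ᵥ (projOf tket) *ᵥ pvec).re
      + mu2 * (star qvec ⬝ᵥ (projOf tket) *ᵥ qvec).re = 1 + c2d := by
    have := congrArg Complex.re dagger
    rw [Complex.add_re, remul, remul] at this
    rw [this]
    simp
  have step : mu1 * (star pvec ⬝ᵥ (projOf tket) *ᵥ pvec).re
      + mu2 * (star qvec ⬝ᵥ (projOf tket) *ᵥ qvec).re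
      ≤ mu1 * (star pvec ⬝ᵥ V *ᵥ pvec).re + mu2 * (star qvec ⬝ᵥ V *ᵥ qvec).re := by
    have h1 := mul_le_mul_of_nonneg_left hp nonneg_mu1
    have h2 := mul_le_mul_of_nonneg_left hq nonneg_mu2
    linarith
  rw [hR] at hL
  linarith [hD ▸ step]

end Main
end Magic

namespace Magic

/-- θ_max of the T state:
inf{ ‖V‖_{W,1} : V Hermitian, V ⪰ |T⟩⟨T| } = 1 + 2 sin(π/18). -/
theorem tstate_maxThauma_sdp :
    sInf {x : ℝ | ∃ V : Matrix (ZMod 3) (ZMod 3) ℂ,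
      V.IsHermitian ∧ (V - projOf tket).PosSemidef ∧ x = wnorm1 3 V}
      = 1 + 2 * Real.sin (Real.pi / 18) := by
  have hmem : (1 + c2d) ∈ {x : ℝ | ∃ V : Matrix (ZMod 3) (ZMod 3) ℂ,
      V.IsHermitian ∧ (V - projOf tket).PosSemidef ∧ x = wnorm1 3 V} := by
    refine ⟨Vopt, (projOf_herm tket).add (projOf_herm wv), ?_, wnorm1_Vopt.symm⟩
    rw [Vopt, add_sub_cancel_left]
    exact projOf_psd wv
  have hlb : ∀ x ∈ {x : ℝ | ∃ V : Matrix (ZMod 3) (ZMod 3) ℂ,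
      V.IsHermitian ∧ (V - projOf tket).PosSemidef ∧ x = wnorm1 3 V}, 1 + c2d ≤ x := by
    rintro x ⟨V, _, hP, rfl⟩
    exact lower_bound V hP
  have hinf : sInf {x : ℝ | ∃ V : Matrix (ZMod 3) (ZMod 3) ℂ,
      V.IsHermitian ∧ (V - projOf tket).PosSemidef ∧ x = wnorm1 3 V} = 1 + c2d :=
    le_antisymm (csInf_le ⟨1 + c2d, hlb⟩ hmem) (le_csInf ⟨_, hmem⟩ hlb)
  rw [hinf, ← htarget]

end Magic
end
end

section
/- Let d be an odd prime, n ≥ 1, and consider the system (ℂ^d)^{⊗n} with its Heisenberg–Weyl operators T_{u₁⊕⋯⊕uₙ} = T_{u₁}⊗⋯⊗T_{uₙ} and the corresponding phase-space point operators. If U is a Clifford unitary on (ℂ^d)^{⊗n}, then the pure state U|0⟩⟨0|^{⊗n}U† has nonnegative discrete Wigner function: W_{U|0⟩⟨0|^{⊗n}U†}(u) ≥ 0 for all phase-space points u. Consequently every stabilizer state σ (a convex combination of such pure states) has nonnegative discrete Wigner function and satisfies ‖σ‖_{W,1} = 1. -/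
set_option linter.unusedSectionVars false
set_option linter.unusedVariables false
set_option linter.unreachableTactic false
set_option linter.unusedTactic false
set_option maxHeartbeats 1000000


open Matrix Complex BigOperators
open scoped ComplexOrder

noncomputable section

namespace Magic

/-- n-fold tensor product of phase-space point operators on (ℂ^d)^{⊗n}. -/
def AptN (d : ℕ) [NeZero d] (n : ℕ) (u : Fin n → ZMod d × ZMod d) :
    Matrix (Fin n → ZMod d) (Fin n → ZMod d) ℂ :=
  Matrix.of fun r c => ∏ i, Apt d (u i) (r i) (c i)

/-- Discrete Wigner function on (ℂ^d)^{⊗n}. -/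
def wigN (d : ℕ) [NeZero d] (n : ℕ) (V : Matrix (Fin n → ZMod d) (Fin n → ZMod d) ℂ)
    (u : Fin n → ZMod d × ZMod d) : ℂ :=
  (AptN d n u * V).trace / ((d : ℂ) ^ n)

/-- Wigner trace norm on (ℂ^d)^{⊗n}. -/
def wnorm1N (d : ℕ) [NeZero d] (n : ℕ)
    (V : Matrix (Fin n → ZMod d) (Fin n → ZMod d) ℂ) : ℝ :=
  ∑ u : Fin n → ZMod d × ZMod d, ‖wigN d n V u‖

/-- The n-fold tensor power |φ⟩⟨φ|^{⊗n} of the rank-one projector onto φ. -/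
def projPow (d : ℕ) [NeZero d] (n : ℕ) (φ : ZMod d → ℂ) :
    Matrix (Fin n → ZMod d) (Fin n → ZMod d) ℂ :=
  Matrix.of fun r c => (∏ i, φ (r i)) * star (∏ i, φ (c i))

/-- n-fold tensor product of Heisenberg–Weyl operators. -/
def HWN (d : ℕ) [NeZero d] (n : ℕ) (u : Fin n → ZMod d × ZMod d) :
    Matrix (Fin n → ZMod d) (Fin n → ZMod d) ℂ :=
  Matrix.of fun r c => ∏ i, HW d (u i) (r i) (c i)

/-- A Clifford unitary on (ℂ^d)^{⊗n}: a unitary mapping Heisenberg–Weyl operators to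
Heisenberg–Weyl operators up to phases under conjugation. -/
def IsCliffordN (d : ℕ) [NeZero d] (n : ℕ)
    (U : Matrix (Fin n → ZMod d) (Fin n → ZMod d) ℂ) : Prop :=
  Uᴴ * U = 1 ∧ U * Uᴴ = 1 ∧
  ∀ u : Fin n → ZMod d × ZMod d, ∃ (θ : ℝ) (u' : Fin n → ZMod d × ZMod d),
    U * HWN d n u * Uᴴ = Complex.exp (θ * Complex.I) • HWN d n u'

/-- The vector |0⟩^{⊗n}. -/
def ket0N (d : ℕ) [NeZero d] (n : ℕ) : (Fin n → ZMod d) → ℂ :=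
  fun r => if r = (fun _ => 0) then 1 else 0

/-- The projector |0⟩⟨0|^{⊗n}. -/
def E00N (d : ℕ) [NeZero d] (n : ℕ) : Matrix (Fin n → ZMod d) (Fin n → ZMod d) ℂ :=
  Matrix.vecMulVec (ket0N d n) (star (ket0N d n))

/-- A stabilizer state on (ℂ^d)^{⊗n}: a convex combination of pure stabilizer states
U|0⟩⟨0|^{⊗n}U† with U Clifford. -/
def IsStabStateN (d : ℕ) [NeZero d] (n : ℕ)
    (σ : Matrix (Fin n → ZMod d) (Fin n → ZMod d) ℂ) : Prop :=
  ∃ (m : ℕ) (p : Fin m → ℝ) (U : Fin m → Matrix (Fin n → ZMod d) (Fin n → ZMod d) ℂ),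
    (∀ j, 0 ≤ p j) ∧ (∑ j, p j = 1) ∧ (∀ j, IsCliffordN d n (U j)) ∧
    σ = ∑ j, (p j : ℂ) • (U j * E00N d n * (U j)ᴴ)

end Magic

namespace Magic

variable {d : ℕ} [NeZero d]

/-- e(x) = ω^x for x : ZMod d -/
def ee (d : ℕ) [NeZero d] (x : ZMod d) : ℂ := omegaC d ^ x.val

def muZ (d : ℕ) : ZMod d := (((d + 1) / 2 : ℕ) : ZMod d)

lemma omega_pow_d : omegaC d ^ d = 1 := by
  rw [omegaC, ← Complex.exp_nat_mul]
  rw [show (d : ℂ) * (2 * Real.pi * Complex.I / d) = 2 * Real.pi * Complex.I by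
    rw [mul_div_assoc', mul_div_cancel_left₀ _ (Nat.cast_ne_zero.2 (NeZero.ne d) : (d:ℂ) ≠ 0)]]
  exact Complex.exp_two_pi_mul_I

lemma omega_ne_zero : omegaC d ≠ 0 := Complex.exp_ne_zero _

lemma omega_prim : IsPrimitiveRoot (omegaC d) d :=
  Complex.isPrimitiveRoot_exp d (NeZero.ne d)

lemma omega_pow_natCast (j : ℕ) : omegaC d ^ j = ee d (j : ZMod d) := by
  rw [ee, ZMod.val_natCast]
  conv_lhs => rw [← Nat.div_add_mod j d]
  rw [pow_add, pow_mul, omega_pow_d, one_pow, one_mul]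

lemma ee_zero : ee d 0 = 1 := by simp [ee]

lemma ee_add (x y : ZMod d) : ee d (x + y) = ee d x * ee d y := by
  have hx := ZMod.natCast_rightInverse (n := d) x
  have hy := ZMod.natCast_rightInverse (n := d) y
  calc ee d (x + y) = ee d ((x.val + y.val : ℕ) : ZMod d) := by
        rw [Nat.cast_add, hx, hy]
    _ = omegaC d ^ (x.val + y.val) := (omega_pow_natCast _).symm
    _ = ee d x * ee d y := by rw [pow_add]; rfl

lemma ee_ne_zero (x : ZMod d) : ee d x ≠ 0 := pow_ne_zero _ omega_ne_zero

lemma ee_mul_ee_neg (x : ZMod d) : ee d x * ee d (-x) = 1 := by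
  rw [← ee_add, add_neg_cancel, ee_zero]

lemma ee_pow_d (x : ZMod d) : ee d x ^ d = 1 := by
  rw [ee, ← pow_mul, mul_comm, pow_mul, omega_pow_d, one_pow]

lemma conj_ee (x : ZMod d) : (starRingEnd ℂ) (ee d x) = ee d (-x) := by
  have h1 : ee d x * (starRingEnd ℂ) (ee d x) = 1 := by
    rw [Complex.mul_conj]
    norm_cast
    rw [show Complex.normSq (ee d x) = ‖ee d x‖ ^ 2 from (Complex.sq_norm _).symm]
    rw [ee, norm_pow, omegaC, Complex.norm_exp]
    rw [show (2 * Real.pi * Complex.I / d).re = 0 by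
      simp [Complex.div_re, Complex.mul_re]]
    simp
  have h2 := ee_mul_ee_neg (d := d) x
  exact mul_left_cancel₀ (ee_ne_zero x) (h1.trans h2.symm)

lemma sum_ee (t : ZMod d) :
    (∑ x : ZMod d, ee d (x * t)) = if t = 0 then (d : ℂ) else 0 := by
  have hterm : ∀ x : ZMod d, ee d (x * t) = (omegaC d ^ t.val) ^ x.val := by
    intro x
    have hx := ZMod.natCast_rightInverse (n := d) x
    have ht := ZMod.natCast_rightInverse (n := d) t
    rw [show x * t = ((x.val * t.val : ℕ) : ZMod d) by rw [Nat.cast_mul, hx, ht],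
      ← omega_pow_natCast, ← pow_mul, mul_comm]
  have hsum : (∑ x : ZMod d, ee d (x * t)) =
      ∑ j ∈ Finset.range d, (omegaC d ^ t.val) ^ j := by
    rw [Finset.sum_congr rfl fun x _ => hterm x]
    refine Finset.sum_bij (fun x _ => x.val) (fun x _ => Finset.mem_range.2 (ZMod.val_lt x))
      (fun x _ y _ h => ZMod.val_injective d h) ?_ (fun _ _ => rfl)
    intro j hj
    exact ⟨(j : ZMod d), Finset.mem_univ _, ZMod.val_natCast_of_lt (Finset.mem_range.1 hj)⟩
  by_cases ht : t = 0
  · subst ht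
    rw [if_pos rfl]
    have h1 : ∀ x : ZMod d, ee d (x * 0) = 1 := fun x => by rw [mul_zero, ee_zero]
    rw [Finset.sum_congr rfl fun x _ => h1 x, Finset.sum_const, Finset.card_univ, ZMod.card]
    simp
  · rw [hsum, if_neg ht]
    have h1 : omegaC d ^ t.val ≠ 1 := by
      refine (omega_prim).pow_ne_one_of_pos_of_lt ?_ (ZMod.val_lt t)
      exact fun (h : t.val = 0) => ht (by
        have := ZMod.natCast_rightInverse (n := d) t
        rw [← this, h, Nat.cast_zero])
    rw [geom_sum_eq h1, ← pow_mul, mul_comm, pow_mul, omega_pow_d, one_pow]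
    simp

lemma two_mu (hodd : Odd d) : (muZ d) * 2 = 1 := by
  have h2 : 2 * ((d + 1) / 2) = d + 1 := by
    obtain ⟨k, hk⟩ := hodd; omega
  have : ((2 * ((d + 1) / 2) : ℕ) : ZMod d) = ((d + 1 : ℕ) : ZMod d) := by rw [h2]
  push_cast at this
  rw [ZMod.natCast_self] at this
  rw [muZ]
  linear_combination this


lemma tau_eq (hodd : Odd d) : tauC d = omegaC d ^ ((d + 1) / 2) := by
  have h2 : 2 * ((d + 1) / 2) = d + 1 := by obtain ⟨k, hk⟩ := hodd; omega
  have h3 : (((d + 1) / 2 : ℕ) : ℂ) * 2 = (d : ℂ) + 1 := by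
    have := congrArg (fun m : ℕ => (m : ℂ)) h2
    push_cast at this
    linear_combination this
  have hd : (d : ℂ) ≠ 0 := Nat.cast_ne_zero.2 (NeZero.ne d)
  have hc : (((d + 1) / 2 : ℕ) : ℂ) * (2 * Real.pi * Complex.I / d) =
      ((d : ℂ) + 1) * Real.pi * Complex.I / d := by
    rw [mul_div_assoc', div_left_inj' hd]
    linear_combination (Real.pi : ℂ) * Complex.I * h3
  rw [omegaC, ← Complex.exp_nat_mul, tauC, hc]

lemma tau_pow_natCast (hodd : Odd d) (k : ℕ) :
    tauC d ^ k = ee d (muZ d * (k : ZMod d)) := by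
  rw [tau_eq hodd, ← pow_mul, omega_pow_natCast]
  congr 1
  push_cast [muZ]
  ring

lemma tau_ne_zero : tauC d ≠ 0 := Complex.exp_ne_zero _

lemma tau_zpow_neg (hodd : Odd d) (k : ℕ) :
    tauC d ^ (-(k : ℤ)) = ee d (-(muZ d * (k : ZMod d))) := by
  rw [_root_.zpow_neg, zpow_natCast, tau_pow_natCast hodd]
  exact inv_eq_of_mul_eq_one_right (ee_mul_ee_neg _)


lemma X_pow_apply (b : ℕ) (r c : ZMod d) :
    (shiftX d ^ b) r c = if r = c + (b : ZMod d) then 1 else 0 := by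
  induction b generalizing r c with
  | zero => simp [Matrix.one_apply]
  | succ b ih =>
    rw [pow_succ, Matrix.mul_apply]
    have h : ∀ k : ZMod d, (shiftX d ^ b) r k * shiftX d k c =
        if k = c + 1 then (if r = k + (b : ZMod d) then 1 else 0) else 0 := by
      intro k
      rw [ih, shiftX]
      by_cases h1 : k = c + 1 <;> by_cases h2 : r = k + (b : ZMod d) <;>
        simp [h1, h2, Matrix.of_apply]
    rw [Finset.sum_congr rfl fun k _ => h k, Finset.sum_ite_eq' Finset.univ (c+1)]
    simp only [Finset.mem_univ, if_true]
    have : c + 1 + (b : ZMod d) = c + ((b : ℕ) + 1 : ℕ) := by push_cast; ring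
    rw [this]

lemma Z_pow_apply (a : ℕ) (r c : ZMod d) :
    (boostZ d ^ a) r c = if r = c then ee d ((a : ZMod d) * r) else 0 := by
  rw [boostZ, Matrix.diagonal_pow]
  rcases eq_or_ne r c with h | h
  · subst h
    rw [Matrix.diagonal_apply_eq, if_pos rfl]
    show (omegaC d ^ r.val) ^ a = _
    rw [← pow_mul, omega_pow_natCast]
    congr 1
    push_cast [ZMod.natCast_rightInverse (n := d) r]
    ring
  · rw [Matrix.diagonal_apply_ne _ h, if_neg h]

lemma HW_apply (hodd : Odd d) (u : ZMod d × ZMod d) (r c : ZMod d) :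
    HW d u r c = ee d (u.1 * r - muZ d * (u.1 * u.2)) * (if r = c + u.2 then 1 else 0) := by
  rw [HW, Matrix.smul_apply, Matrix.mul_apply]
  have h : ∀ k : ZMod d, (boostZ d ^ u.1.val) r k * (shiftX d ^ u.2.val) k c =
      if k = r then (ee d ((u.1.val : ZMod d) * r) * if r = c + ((u.2.val : ℕ) : ZMod d) then 1 else 0) else 0 := by
    intro k
    rw [Z_pow_apply, X_pow_apply]
    rcases eq_or_ne k r with h1 | h1
    · subst h1; simp
    · rw [if_neg (Ne.symm h1), if_neg h1, zero_mul]
  rw [Finset.sum_congr rfl fun k _ => h k, Finset.sum_ite_eq' Finset.univ r]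
  simp only [Finset.mem_univ, if_true]
  rw [tau_zpow_neg hodd, smul_eq_mul,
    ZMod.natCast_rightInverse (n := d) u.1, ZMod.natCast_rightInverse (n := d) u.2]
  have : ((u.1.val * u.2.val : ℕ) : ZMod d) = u.1 * u.2 := by
    push_cast [ZMod.natCast_rightInverse (n := d) u.1, ZMod.natCast_rightInverse (n := d) u.2]
    ring
  rw [this, ← mul_assoc, ← ee_add]
  congr 2
  ring

lemma HW_mul (hodd : Odd d) (u v : ZMod d × ZMod d) :
    HW d u * HW d v = ee d (muZ d * (u.1 * v.2 - v.1 * u.2)) • HW d (u + v) := by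
  have h2 := two_mu (d := d) hodd
  ext r c
  rw [Matrix.mul_apply, Matrix.smul_apply]
  have h : ∀ k : ZMod d, HW d u r k * HW d v k c =
      if k = c + v.2 then
        (ee d (u.1 * r - muZ d * (u.1 * u.2)) * ee d (v.1 * k - muZ d * (v.1 * v.2)) *
          if r = k + u.2 then 1 else 0) else 0 := by
    intro k
    rw [HW_apply hodd, HW_apply hodd]
    by_cases h1 : k = c + v.2 <;> by_cases h3 : r = k + u.2 <;> simp [h1, h3] <;> ring
  rw [Finset.sum_congr rfl fun k _ => h k, Finset.sum_ite_eq' Finset.univ (c + v.2)]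
  simp only [Finset.mem_univ, if_true]
  rw [HW_apply hodd]
  have hcond : (r = c + v.2 + u.2) ↔ (r = c + (u + v).2) := by
    constructor <;> intro h <;> rw [h] <;> [skip; skip] <;>
      show _ = _ <;> simp [Prod.snd_add] <;> ring
  by_cases hr : r = c + v.2 + u.2
  · rw [if_pos hr, if_pos (hcond.1 hr), mul_one, mul_one, ← ee_add, smul_eq_mul, ← ee_add]
    congr 1
    subst hr
    simp only [Prod.fst_add, Prod.snd_add]
    linear_combination (v.1 * u.2) * h2
  · rw [if_neg hr, if_neg (fun h => hr (hcond.2 h)), smul_eq_mul]; ring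

lemma HW_zero : HW d (0 : ZMod d × ZMod d) = 1 := by
  rw [HW]
  show tauC d ^ (-(((0 : ZMod d).val * (0 : ZMod d).val : ℕ) : ℤ)) •
    (boostZ d ^ (0 : ZMod d).val * shiftX d ^ (0 : ZMod d).val) = 1
  rw [ZMod.val_zero]
  norm_num

lemma HW_entry_ne_zero (hodd : Odd d) (u : ZMod d × ZMod d) :
    HW d u u.2 0 ≠ 0 := by
  rw [HW_apply hodd, if_pos (by rw [zero_add]), mul_one]
  exact ee_ne_zero _


lemma star_ee (x : ZMod d) : star (ee d x) = ee d (-x) := conj_ee x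

lemma HW_conjT (hodd : Odd d) (u : ZMod d × ZMod d) : (HW d u)ᴴ = HW d (-u) := by
  have h2 := two_mu (d := d) hodd
  ext r c
  rw [Matrix.conjTranspose_apply, HW_apply hodd, HW_apply hodd, star_mul', star_ee,
    apply_ite (star : ℂ → ℂ), star_one, star_zero]
  have h1 : (-u).1 = -u.1 := rfl
  have hs : (-u).2 = -u.2 := rfl
  have hcond : (c = r + u.2) ↔ (r = c + (-u).2) := by
    rw [hs]
    constructor <;> intro h <;> rw [h] <;> ring
  by_cases hc : c = r + u.2
  · rw [if_pos hc, if_pos (hcond.1 hc), mul_one, mul_one]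
    subst hc
    rw [h1, hs]
    congr 1
    linear_combination (u.1 * u.2) * h2
  · rw [if_neg hc, if_neg (fun h => hc (hcond.2 h)), mul_zero, mul_zero]

lemma A0_apply (hodd : Odd d) (r c : ZMod d) :
    A0 d r c = if r + c = 0 then 1 else 0 := by
  have h2 := two_mu (d := d) hodd
  rw [A0, Matrix.smul_apply, Matrix.sum_apply, Fintype.sum_prod_type]
  have hin : ∀ a : ZMod d, (∑ b : ZMod d, HW d (a, b) r c) = ee d (a * (r - muZ d * (r - c))) := by
    intro a
    have h : ∀ b : ZMod d, HW d (a, b) r c =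
        if b = r - c then ee d (a * r - muZ d * (a * (r - c))) else 0 := by
      intro b
      rw [HW_apply hodd]
      rcases eq_or_ne b (r - c) with hb | hb
      · subst hb
        rw [if_pos rfl, if_pos (by ring), mul_one]
      · rw [if_neg hb, if_neg (fun h => hb (by rw [h]; ring)), mul_zero]
    rw [Finset.sum_congr rfl fun b _ => h b, Finset.sum_ite_eq' Finset.univ (r - c)]
    simp only [Finset.mem_univ, if_true]
    congr 1
    ring
  rw [Finset.sum_congr rfl fun a _ => hin a, sum_ee (r - muZ d * (r - c))]
  have hcond : (r - muZ d * (r - c) = 0) ↔ (r + c = 0) := by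
    constructor <;> intro h
    · linear_combination 2 * h + (r - c) * h2
    · linear_combination (muZ d) * h - r * h2
  rcases eq_or_ne (r + c) 0 with hrc | hrc
  · rw [if_pos (hcond.2 hrc), if_pos hrc, smul_eq_mul,
      inv_mul_cancel₀ (Nat.cast_ne_zero.2 (NeZero.ne d) : (d:ℂ) ≠ 0)]
  · rw [if_neg (fun h => hrc (hcond.1 h)), if_neg hrc, smul_eq_mul, mul_zero]

lemma mul_A0_apply (hodd : Odd d) (M : Matrix (ZMod d) (ZMod d) ℂ) (r k : ZMod d) :
    (M * A0 d) r k = M r (-k) := by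
  rw [Matrix.mul_apply]
  have h : ∀ j : ZMod d, M r j * A0 d j k = if j = -k then M r (-k) else 0 := by
    intro j
    rw [A0_apply hodd]
    rcases eq_or_ne j (-k) with hj | hj
    · subst hj; rw [if_pos (by ring), if_pos rfl, mul_one]
    · rw [if_neg (fun h => hj (eq_neg_of_add_eq_zero_left h)), if_neg hj, mul_zero]
  rw [Finset.sum_congr rfl fun j _ => h j, Finset.sum_ite_eq' Finset.univ (-k)]
  simp

lemma trace_HW_A0 (hodd : Odd d) (v : ZMod d × ZMod d) :
    (HW d v * A0 d).trace = 1 := by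
  have h2 := two_mu (d := d) hodd
  rw [Matrix.trace]
  simp only [Matrix.diag_apply]
  have h : ∀ k : ZMod d, (HW d v * A0 d) k k =
      if k = muZ d * v.2 then ee d (v.1 * k - muZ d * (v.1 * v.2)) else 0 := by
    intro k
    rw [mul_A0_apply hodd, HW_apply hodd]
    have hcond : (k = -k + v.2) ↔ (k = muZ d * v.2) := by
      constructor <;> intro h
      · linear_combination (muZ d) * h - k * h2
      · linear_combination 2 * h + v.2 * h2
    rcases eq_or_ne k (muZ d * v.2) with hk | hk
    · rw [if_pos (hcond.2 hk), if_pos hk, mul_one]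
    · rw [if_neg (fun h => hk (hcond.1 h)), if_neg hk, mul_zero]
  rw [Finset.sum_congr rfl fun k _ => h k, Finset.sum_ite_eq' Finset.univ (muZ d * v.2)]
  simp only [Finset.mem_univ, if_true]
  rw [show v.1 * (muZ d * v.2) - muZ d * (v.1 * v.2) = 0 by ring, ee_zero]

lemma trace_Apt_HW (hodd : Odd d) (u v : ZMod d × ZMod d) :
    (Apt d u * HW d v).trace = ee d (v.1 * u.2 - u.1 * v.2) := by
  have h2 := two_mu (d := d) hodd
  have e1 : Apt d u * HW d v = HW d u * ((A0 d * HW d (-u)) * HW d v) := by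
    rw [Apt, HW_conjT hodd]
    simp only [mul_assoc]
  rw [e1, Matrix.trace_mul_comm, mul_assoc, mul_assoc]
  have e3 : HW d (-u) * (HW d v * HW d u) = ee d (v.1 * u.2 - u.1 * v.2) • HW d v := by
    rw [HW_mul hodd v u, Matrix.mul_smul, HW_mul hodd (-u) (v + u), smul_smul, ← ee_add]
    rw [show -u + (v + u) = v by ring]
    congr 1
    · congr 1
      simp only [Prod.fst_add, Prod.snd_add, Prod.fst_neg, Prod.snd_neg]
      linear_combination (v.1 * u.2 - u.1 * v.2) * h2
  rw [e3, Matrix.mul_smul, Matrix.trace_smul, smul_eq_mul, Matrix.trace_mul_comm,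
    trace_HW_A0 hodd, mul_one]

lemma Apt_apply (hodd : Odd d) (u : ZMod d × ZMod d) (r c : ZMod d) :
    Apt d u r c = ee d (u.1 * (r - c)) * (if r + c = u.2 * 2 then 1 else 0) := by
  have h2 := two_mu (d := d) hodd
  rw [Apt, HW_conjT hodd, Matrix.mul_apply]
  have h1 : (-u).1 = -u.1 := rfl
  have hs : (-u).2 = -u.2 := rfl
  have h : ∀ k : ZMod d, (HW d u * A0 d) r k * HW d (-u) k c =
      if k = c - u.2 then (HW d u * A0 d) r (c - u.2) * HW d (-u) (c - u.2) c else 0 := by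
    intro k
    rcases eq_or_ne k (c - u.2) with hk | hk
    · subst hk; rw [if_pos rfl]
    · have hcc : ¬ (k = c + (-u).2) := fun hh => hk (by rw [hh, hs]; ring)
      rw [if_neg hk, HW_apply hodd, if_neg hcc, mul_zero, mul_zero]
  rw [Finset.sum_congr rfl fun k _ => h k, Finset.sum_ite_eq' Finset.univ (c - u.2)]
  simp only [Finset.mem_univ, if_true]
  rw [mul_A0_apply hodd, HW_apply hodd, HW_apply hodd, h1, hs]
  have hcond : (r = -(c - u.2) + u.2) ↔ (r + c = u.2 * 2) := by
    constructor <;> intro h <;> linear_combination h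
  rcases eq_or_ne (r + c) (u.2 * 2) with hrc | hrc
  · rw [if_pos (hcond.2 hrc), if_pos (show c - u.2 = c + -u.2 by ring), mul_one, mul_one,
      ← ee_add, if_pos hrc, mul_one]
    congr 1
    linear_combination (-(u.1 * u.2)) * h2
  · rw [if_neg (fun h => hrc (hcond.1 h)), if_neg hrc, mul_zero, zero_mul, mul_zero]

lemma sum_Apt_entry (hodd : Odd d) (r c : ZMod d) :
    (∑ x : ZMod d × ZMod d, Apt d x r c) = if r = c then (d : ℂ) else 0 := by
  have h2 := two_mu (d := d) hodd
  rw [Fintype.sum_prod_type]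
  have hin : ∀ a : ZMod d, (∑ b : ZMod d, Apt d (a, b) r c) = ee d (a * (r - c)) := by
    intro a
    have h : ∀ b : ZMod d, Apt d (a, b) r c =
        if b = muZ d * (r + c) then ee d (a * (r - c)) else 0 := by
      intro b
      rw [Apt_apply hodd]
      have hcond : (r + c = b * 2) ↔ (b = muZ d * (r + c)) := by
        constructor <;> intro h
        · linear_combination -(muZ d) * h - b * h2
        · linear_combination -2 * h - (r + c) * h2
      rcases eq_or_ne b (muZ d * (r + c)) with hb | hb
      · rw [if_pos (hcond.2 hb), if_pos hb, mul_one]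
      · rw [if_neg (fun h => hb (hcond.1 h)), if_neg hb, mul_zero]
    rw [Finset.sum_congr rfl fun b _ => h b, Finset.sum_ite_eq' Finset.univ (muZ d * (r + c))]
    simp
  rw [Finset.sum_congr rfl fun a _ => hin a]
  have : ∀ a : ZMod d, ee d (a * (r - c)) = ee d (a * (r - c)) := fun _ => rfl
  rw [sum_ee (r - c)]
  rcases eq_or_ne r c with h | h
  · rw [if_pos (by rw [h, sub_self]), if_pos h]
  · rw [if_neg (fun hh => h (by linear_combination hh)), if_neg h]

lemma sum_HWz_entry (hodd : Odd d) (r c : ZMod d) :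
    (∑ x : ZMod d, HW d (x, 0) r c) = if r = 0 ∧ c = 0 then (d : ℂ) else 0 := by
  have h : ∀ x : ZMod d, HW d (x, 0) r c = if r = c then ee d (x * r) else 0 := by
    intro x
    rw [HW_apply hodd]
    rcases eq_or_ne r c with h | h
    · rw [if_pos (by rw [h, add_zero]), if_pos h, mul_one]
      congr 1
      ring
    · rw [if_neg (fun hh : r = c + (0:ZMod d) => h (by rw [hh, add_zero])), if_neg h, mul_zero]
  rw [Finset.sum_congr rfl fun x _ => h x]
  rcases eq_or_ne r c with hrc | hrc
  · subst hrc
    simp only [eq_self_iff_true, if_true]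
    rw [sum_ee r]
    rcases eq_or_ne r 0 with h0 | h0
    · rw [if_pos h0, if_pos ⟨h0, h0⟩]
    · rw [if_neg h0, if_neg (fun hh => h0 hh.1)]
  · rw [Finset.sum_congr rfl fun x _ => if_neg hrc, Finset.sum_const, smul_zero,
      if_neg (fun hh => hrc (hh.1.trans hh.2.symm))]

variable {n : ℕ}

def tens (d n : ℕ) [NeZero d] (M : Fin n → Matrix (ZMod d) (ZMod d) ℂ) :
    Matrix (Fin n → ZMod d) (Fin n → ZMod d) ℂ :=
  Matrix.of fun r c => ∏ i, M i (r i) (c i)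

lemma tens_mul (M N : Fin n → Matrix (ZMod d) (ZMod d) ℂ) :
    tens d n M * tens d n N = tens d n (fun i => M i * N i) := by
  ext r c
  rw [Matrix.mul_apply]
  show (∑ k : Fin n → ZMod d, (∏ i, M i (r i) (k i)) * ∏ i, N i (k i) (c i)) =
    ∏ i, (M i * N i) (r i) (c i)
  have h1 : ∀ k : Fin n → ZMod d,
      ((∏ i, M i (r i) (k i)) * ∏ i, N i (k i) (c i)) =
        ∏ i, (M i (r i) (k i) * N i (k i) (c i)) := fun k => (Finset.prod_mul_distrib).symm
  rw [Finset.sum_congr rfl fun k _ => h1 k]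
  have h2 := Finset.prod_univ_sum (fun _ : Fin n => (Finset.univ : Finset (ZMod d)))
    (fun i x => M i (r i) x * N i x (c i))
  rw [Fintype.piFinset_univ] at h2
  rw [← h2]
  exact Finset.prod_congr rfl fun i _ => (Matrix.mul_apply).symm

lemma tens_trace (M : Fin n → Matrix (ZMod d) (ZMod d) ℂ) :
    (tens d n M).trace = ∏ i, (M i).trace := by
  rw [Matrix.trace]
  simp only [Matrix.diag_apply]
  show (∑ r : Fin n → ZMod d, ∏ i, M i (r i) (r i)) = _
  have h2 := Finset.prod_univ_sum (fun _ : Fin n => (Finset.univ : Finset (ZMod d)))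
    (fun i x => M i x x)
  rw [Fintype.piFinset_univ] at h2
  rw [← h2]
  rfl

lemma tens_smul (a : Fin n → ℂ) (M : Fin n → Matrix (ZMod d) (ZMod d) ℂ) :
    tens d n (fun i => a i • M i) = (∏ i, a i) • tens d n M := by
  ext r c
  show (∏ i, (a i • M i) (r i) (c i)) = ((∏ i, a i) • tens d n M) r c
  simp only [Matrix.smul_apply, smul_eq_mul]
  rw [Finset.prod_mul_distrib]
  rfl

lemma tens_one : tens d n (fun _ => (1 : Matrix (ZMod d) (ZMod d) ℂ)) = 1 := by
  ext r c
  show (∏ i, (1 : Matrix (ZMod d) (ZMod d) ℂ) (r i) (c i)) = (1 : Matrix _ _ ℂ) r c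
  simp only [Matrix.one_apply]
  by_cases h : r = c
  · subst h; simp
  · rw [if_neg h]
    obtain ⟨i, hi⟩ := Function.ne_iff.1 h
    exact Finset.prod_eq_zero (Finset.mem_univ i) (if_neg hi)

lemma AptN_eq (u : Fin n → ZMod d × ZMod d) :
    AptN d n u = tens d n (fun i => Apt d (u i)) := rfl

lemma HWN_eq (u : Fin n → ZMod d × ZMod d) :
    HWN d n u = tens d n (fun i => HW d (u i)) := rfl

lemma HWN_mul (hodd : Odd d) (u v : Fin n → ZMod d × ZMod d) :
    HWN d n u * HWN d n v =
      (∏ i, ee d (muZ d * ((u i).1 * (v i).2 - (v i).1 * (u i).2))) • HWN d n (u + v) := by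
  rw [HWN_eq, HWN_eq, HWN_eq, tens_mul]
  rw [show (fun i => HW d (u i) * HW d (v i)) =
    fun i => ee d (muZ d * ((u i).1 * (v i).2 - (v i).1 * (u i).2)) • HW d ((u + v) i) from
    funext fun i => HW_mul hodd (u i) (v i)]
  exact tens_smul _ _

lemma HWN_zero : HWN d n (0 : Fin n → ZMod d × ZMod d) = 1 := by
  rw [HWN_eq, show (fun i => HW d ((0 : Fin n → ZMod d × ZMod d) i)) =
    fun _ => (1 : Matrix (ZMod d) (ZMod d) ℂ) from funext fun i => HW_zero, tens_one]

lemma trace_AptN_HWN (hodd : Odd d) (u v : Fin n → ZMod d × ZMod d) :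
    (AptN d n u * HWN d n v).trace =
      ∏ i, ee d ((v i).1 * (u i).2 - (u i).1 * (v i).2) := by
  rw [AptN_eq, HWN_eq, tens_mul, tens_trace]
  exact Finset.prod_congr rfl fun i _ => trace_Apt_HW hodd _ _

lemma trace_AptN (hodd : Odd d) (u : Fin n → ZMod d × ZMod d) :
    (AptN d n u).trace = 1 := by
  have h := trace_AptN_HWN hodd u 0
  rw [HWN_zero, mul_one] at h
  rw [h]
  refine Finset.prod_eq_one fun i _ => ?_
  show ee d ((0 : ZMod d × ZMod d).1 * (u i).2 - (u i).1 * (0 : ZMod d × ZMod d).2) = 1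
  rw [show (0 : ZMod d × ZMod d).1 * (u i).2 - (u i).1 * (0 : ZMod d × ZMod d).2 = 0 by
    simp, ee_zero]

lemma sum_AptN (hodd : Odd d) :
    (∑ u : Fin n → ZMod d × ZMod d, AptN d n u) = ((d : ℂ) ^ n) • 1 := by
  ext r c
  rw [Matrix.sum_apply]
  show (∑ u : Fin n → ZMod d × ZMod d, ∏ i, Apt d (u i) (r i) (c i)) =
    (((d : ℂ) ^ n) • (1 : Matrix (Fin n → ZMod d) (Fin n → ZMod d) ℂ)) r c
  have h2 := Finset.prod_univ_sum (fun _ : Fin n => (Finset.univ : Finset (ZMod d × ZMod d)))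
    (fun i x => Apt d x (r i) (c i))
  rw [Fintype.piFinset_univ] at h2
  rw [← h2, Finset.prod_congr rfl fun i _ => sum_Apt_entry hodd (r i) (c i),
    Matrix.smul_apply, Matrix.one_apply]
  by_cases h : r = c
  · subst h
    simp
  · rw [if_neg h, smul_zero]
    obtain ⟨i, hi⟩ := Function.ne_iff.1 h
    exact Finset.prod_eq_zero (Finset.mem_univ i) (if_neg hi)

lemma E00N_eq (hodd : Odd d) :
    E00N d n = ((d : ℂ) ^ n)⁻¹ • ∑ a : Fin n → ZMod d, HWN d n (fun i => (a i, 0)) := by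
  have hdn : ((d : ℂ) ^ n) ≠ 0 := pow_ne_zero _ (Nat.cast_ne_zero.2 (NeZero.ne d))
  ext r c
  rw [E00N, Matrix.vecMulVec_apply, Matrix.smul_apply, Matrix.sum_apply]
  have hshow : (∑ a : Fin n → ZMod d, HWN d n (fun i => (a i, 0)) r c) =
      ∑ a : Fin n → ZMod d, ∏ i, HW d (a i, 0) (r i) (c i) := rfl
  rw [hshow]
  have h2 := Finset.prod_univ_sum (fun _ : Fin n => (Finset.univ : Finset (ZMod d)))
    (fun i x => HW d (x, 0) (r i) (c i))
  rw [Fintype.piFinset_univ] at h2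
  rw [← h2, Finset.prod_congr rfl fun i _ => sum_HWz_entry hodd (r i) (c i)]
  rw [ket0N, Pi.star_apply, ket0N]
  by_cases hr : r = (fun _ => 0)
  · by_cases hc : c = (fun _ => 0)
    · rw [if_pos hr, if_pos hc]
      rw [Finset.prod_congr rfl fun i _ => if_pos ⟨congrFun hr i, congrFun hc i⟩]
      rw [Finset.prod_const, Finset.card_univ, Fintype.card_fin]
      rw [smul_eq_mul, inv_mul_cancel₀ hdn]
      simp
    · obtain ⟨i, hi⟩ := Function.ne_iff.1 hc
      have hz : (∏ i, if r i = 0 ∧ c i = 0 then (d : ℂ) else 0) = 0 :=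
        Finset.prod_eq_zero (Finset.mem_univ i)
          (if_neg (fun hh : r i = 0 ∧ c i = 0 => hi hh.2))
      rw [if_neg hc, hz, smul_zero]
      simp
  · obtain ⟨i, hi⟩ := Function.ne_iff.1 hr
    have hz : (∏ i, if r i = 0 ∧ c i = 0 then (d : ℂ) else 0) = 0 :=
      Finset.prod_eq_zero (Finset.mem_univ i)
        (if_neg (fun hh : r i = 0 ∧ c i = 0 => hi hh.1))
    rw [if_neg hr, hz, smul_zero, zero_mul]

lemma trace_E00N : (E00N d n).trace = 1 := by
  rw [Matrix.trace]
  simp only [Matrix.diag_apply, E00N, Matrix.vecMulVec_apply]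
  have h : ∀ r : Fin n → ZMod d, ket0N d n r * (star (ket0N d n)) r =
      if r = (fun _ => 0) then 1 else 0 := by
    intro r
    rw [Pi.star_apply, ket0N]
    by_cases h : r = (fun _ => 0) <;> simp [h]
  rw [Finset.sum_congr rfl fun r _ => h r, Finset.sum_ite_eq' Finset.univ (fun _ => 0)]
  simp

lemma key_nonneg (hodd : Odd d) (n : ℕ) (U : Matrix (Fin n → ZMod d) (Fin n → ZMod d) ℂ)
    (hU : IsCliffordN d n U) (u : Fin n → ZMod d × ZMod d) :
    ∃ x : ℝ, 0 ≤ x ∧ wigN d n (U * E00N d n * Uᴴ) u = (x : ℂ) := by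
  have hdn : ((d : ℂ) ^ n) ≠ 0 := pow_ne_zero _ (Nat.cast_ne_zero.2 (NeZero.ne d))
  obtain ⟨hU1, hU2, hC⟩ := hU
  choose θ f hf using hC
  set g : (Fin n → ZMod d) → (Fin n → ZMod d × ZMod d) := fun a i => (a i, 0) with hg
  set s : (Fin n → ZMod d) → Matrix (Fin n → ZMod d) (Fin n → ZMod d) ℂ :=
    fun a => U * HWN d n (g a) * Uᴴ with hsdef
  have hs : ∀ a, s a = U * HWN d n (g a) * Uᴴ := fun a => rfl
  have hHgmul : ∀ a b : Fin n → ZMod d,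
      HWN d n (g a) * HWN d n (g b) = HWN d n (g (a + b)) := by
    intro a b
    rw [HWN_mul hodd]
    have h1 : (∏ i, ee d (muZ d * ((g a i).1 * (g b i).2 - (g b i).1 * (g a i).2))) = 1 := by
      refine Finset.prod_eq_one fun i _ => ?_
      show ee d (muZ d * ((a i) * 0 - (b i) * 0)) = 1
      rw [show muZ d * ((a i) * 0 - (b i) * 0) = 0 by ring, ee_zero]
    have h2 : g a + g b = g (a + b) := by
      funext i
      show ((a i, (0:ZMod d)) + (b i, 0)) = ((a + b) i, 0)
      simp [Prod.ext_iff]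
    rw [h1, one_smul, h2]
  have hsadd : ∀ a b : Fin n → ZMod d, s (a + b) = s a * s b := by
    intro a b
    rw [hs, hs, hs, ← hHgmul]
    have h3 : (U * HWN d n (g a) * Uᴴ) * (U * HWN d n (g b) * Uᴴ)
        = U * (HWN d n (g a) * ((Uᴴ * U) * (HWN d n (g b) * Uᴴ))) := by
      simp only [mul_assoc]
    rw [h3, hU1, one_mul]
    simp only [mul_assoc]
  set F : (Fin n → ZMod d) → ℂ := fun a => (AptN d n u * s a).trace with hF
  have hFa : ∀ a, F a = (AptN d n u * s a).trace := fun a => rfl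
  have hF0 : F 0 = 1 := by
    have hg0 : g 0 = 0 := funext fun i => by
      show ((0 : Fin n → ZMod d) i, (0 : ZMod d)) = 0
      simp [Prod.ext_iff]
    rw [hFa, hs, hg0, HWN_zero, mul_one, hU2, mul_one, trace_AptN hodd]
  set χ : (Fin n → ZMod d × ZMod d) → ℂ :=
    fun v => ∏ i, ee d ((v i).1 * (u i).2 - (u i).1 * (v i).2) with hχ
  have hχd : ∀ v, χ v = ∏ i, ee d ((v i).1 * (u i).2 - (u i).1 * (v i).2) := fun v => rfl
  have hFval : ∀ a, F a = Complex.exp (θ (g a) * Complex.I) * χ (f (g a)) := by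
    intro a
    rw [hFa, hs, hf (g a), Matrix.mul_smul, Matrix.trace_smul, smul_eq_mul,
      trace_AptN_HWN hodd, hχd]
  have hχadd : ∀ v w, χ (v + w) = χ v * χ w := by
    intro v w
    rw [hχd, hχd, hχd, ← Finset.prod_mul_distrib]
    refine Finset.prod_congr rfl fun i _ => ?_
    rw [← ee_add]
    congr 1
    have h1 : ((v + w) i).1 = (v i).1 + (w i).1 := rfl
    have h2' : ((v + w) i).2 = (v i).2 + (w i).2 := rfl
    rw [h1, h2']; ring
  have hFmul : ∀ a b, F (a + b) = F a * F b := by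
    intro a b
    set v := f (g a) with hv
    set w := f (g b) with hw
    set c : ℂ := ∏ i, ee d (muZ d * ((v i).1 * (w i).2 - (w i).1 * (v i).2)) with hc
    set c' : ℂ := ∏ i, ee d (muZ d * ((w i).1 * (v i).2 - (v i).1 * (w i).2)) with hc2'
    have hsab : s a * s b = (Complex.exp (θ (g a) * Complex.I) *
        Complex.exp (θ (g b) * Complex.I) * c) • HWN d n (v + w) := by
      rw [hs, hs, hf (g a), hf (g b), Matrix.smul_mul, Matrix.mul_smul, HWN_mul hodd,
        smul_smul, smul_smul, mul_assoc, ← hv, ← hw, ← hc]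
    have hsba : s b * s a = (Complex.exp (θ (g b) * Complex.I) *
        Complex.exp (θ (g a) * Complex.I) * c') • HWN d n (w + v) := by
      rw [hs, hs, hf (g b), hf (g a), Matrix.smul_mul, Matrix.mul_smul, HWN_mul hodd,
        smul_smul, smul_smul, mul_assoc, ← hv, ← hw, ← hc2']
    have hswap : c = c' := by
      have hcomm : s a * s b = s b * s a := by rw [← hsadd, ← hsadd, add_comm]
      rw [hsab, hsba, show w + v = v + w from add_comm w v] at hcomm
      have hne : HWN d n (v + w) (fun i => ((v+w) i).2) (fun _ => 0) ≠ 0 := by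
        show (∏ i, HW d ((v+w) i) (((v+w) i).2) ((fun _ => (0:ZMod d)) i)) ≠ 0
        exact Finset.prod_ne_zero_iff.2 fun i _ => HW_entry_ne_zero hodd _
      have hent := congrFun (congrFun hcomm (fun i => ((v+w) i).2)) (fun _ => 0)
      rw [Matrix.smul_apply, Matrix.smul_apply, smul_eq_mul, smul_eq_mul] at hent
      have hEq := mul_right_cancel₀ hne hent
      rw [mul_comm (Complex.exp ((θ (g b) : ℝ) * Complex.I))
        (Complex.exp ((θ (g a) : ℝ) * Complex.I))] at hEq
      exact mul_left_cancel₀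
        (mul_ne_zero (Complex.exp_ne_zero _) (Complex.exp_ne_zero _)) hEq
    have hcc : c * c = 1 := by
      nth_rewrite 2 [hswap]
      rw [hc, hc2', ← Finset.prod_mul_distrib]
      refine Finset.prod_eq_one fun i _ => ?_
      rw [← ee_add, show muZ d * ((v i).1 * (w i).2 - (w i).1 * (v i).2) +
        muZ d * ((w i).1 * (v i).2 - (v i).1 * (w i).2) = 0 by ring, ee_zero]
    have hcd : c ^ d = 1 := by
      rw [hc, ← Finset.prod_pow]
      exact Finset.prod_eq_one fun i _ => ee_pow_d _
    have hc1 : c = 1 := by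
      obtain ⟨k, hk⟩ := hodd
      have h1 : c = (c * c) ^ k * c := by rw [hcc, one_pow, one_mul]
      have h2 : (c * c) ^ k * c = c ^ d := by rw [hk]; ring
      rw [h1, h2, hcd]
    have hstep : F (a + b) = Complex.exp (θ (g a) * Complex.I) *
        Complex.exp (θ (g b) * Complex.I) * c * χ (v + w) := by
      rw [hFa, hsadd, hsab, Matrix.mul_smul, Matrix.trace_smul, smul_eq_mul,
        trace_AptN_HWN hodd, hχd]
    rw [hstep, hFval a, hFval b, hχadd, hc1, ← hv, ← hw]
    ring
  -- character sum
  set S : ℂ := ∑ a : Fin n → ZMod d, F a with hSdef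
  have hS01 : S = 0 ∨ S = ((d : ℂ) ^ n) := by
    by_cases hall : ∀ a, F a = 1
    · right
      have hcard : Fintype.card (Fin n → ZMod d) = d ^ n := by
        rw [Fintype.card_fun, ZMod.card, Fintype.card_fin]
      rw [hSdef, Finset.sum_congr rfl fun a _ => hall a, Finset.sum_const,
        Finset.card_univ, hcard, nsmul_eq_mul, mul_one, Nat.cast_pow]
    · left
      push_neg at hall
      obtain ⟨b, hb⟩ := hall
      have hmul : F b * S = S := by
        rw [hSdef, Finset.mul_sum]
        rw [Finset.sum_congr rfl fun a _ => (hFmul b a).symm]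
        exact Fintype.sum_equiv (Equiv.addLeft b) _ _ (fun a => rfl)
      have hz : (F b - 1) * S = 0 := by rw [sub_mul, one_mul, hmul, sub_self]
      rcases mul_eq_zero.1 hz with h | h
      · exact absurd (by linear_combination h : F b = 1) hb
      · exact h
  -- connect to wigN
  have h5 : (AptN d n u *
      (U * (∑ a : Fin n → ZMod d, HWN d n (fun i => (a i, 0))) * Uᴴ)).trace = S := by
    rw [Matrix.mul_sum, Matrix.sum_mul, Matrix.mul_sum, Matrix.trace_sum, hSdef]
  have hnum : (AptN d n u * (U * E00N d n * Uᴴ)).trace = ((d:ℂ)^n)⁻¹ * S := by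
    rw [E00N_eq hodd, Matrix.mul_smul, Matrix.smul_mul, Matrix.mul_smul,
      Matrix.trace_smul, smul_eq_mul, h5]
  have hwig : wigN d n (U * E00N d n * Uᴴ) u = ((d:ℂ)^n)⁻¹ * S / ((d:ℂ)^n) := by
    rw [wigN, hnum]
  obtain h | h := hS01
  · refine ⟨0, le_refl 0, ?_⟩
    rw [hwig, h]
    simp
  · refine ⟨((d:ℝ)^n)⁻¹, by positivity, ?_⟩
    rw [hwig, h, inv_mul_cancel₀ hdn, one_div]
    push_cast
    ring

lemma wigN_sum_smul (n m : ℕ) (p : Fin m → ℝ)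
    (M : Fin m → Matrix (Fin n → ZMod d) (Fin n → ZMod d) ℂ) (u : Fin n → ZMod d × ZMod d) :
    wigN d n (∑ j, (p j : ℂ) • M j) u = ∑ j, (p j : ℂ) * wigN d n (M j) u := by
  rw [wigN, Matrix.mul_sum, Matrix.trace_sum, Finset.sum_div]
  refine Finset.sum_congr rfl fun j _ => ?_
  rw [Matrix.mul_smul, Matrix.trace_smul, smul_eq_mul, wigN, mul_div_assoc]

lemma sum_wigN (hodd : Odd d) (n : ℕ) (V : Matrix (Fin n → ZMod d) (Fin n → ZMod d) ℂ) :
    (∑ u : Fin n → ZMod d × ZMod d, wigN d n V u) = V.trace := by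
  have hdn : ((d : ℂ) ^ n) ≠ 0 := pow_ne_zero _ (Nat.cast_ne_zero.2 (NeZero.ne d))
  have h1 : (∑ u : Fin n → ZMod d × ZMod d, wigN d n V u) =
      ((∑ u : Fin n → ZMod d × ZMod d, AptN d n u) * V).trace / (d:ℂ)^n := by
    rw [Matrix.sum_mul, Matrix.trace_sum, Finset.sum_div]
    rfl
  rw [h1, sum_AptN hodd, Matrix.smul_mul, one_mul, Matrix.trace_smul, smul_eq_mul]
  field_simp

lemma trace_conj_E (n : ℕ) (U : Matrix (Fin n → ZMod d) (Fin n → ZMod d) ℂ)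
    (hU1 : Uᴴ * U = 1) : (U * E00N d n * Uᴴ).trace = 1 := by
  rw [Matrix.trace_mul_cycle, hU1, one_mul, trace_E00N]


end Magic

namespace Magic

/-- For a Clifford unitary U on (ℂ^d)^{⊗n}, the pure state U|0⟩⟨0|^{⊗n}U†
has nonnegative discrete Wigner function; consequently every stabilizer state has nonnegative
discrete Wigner function and unit Wigner trace norm. -/
theorem clifford_state_wigner_nonneg (d : ℕ) [NeZero d] (hd : Nat.Prime d) (hodd : Odd d)
    (n : ℕ) (hn : 1 ≤ n)
    (U : Matrix (Fin n → ZMod d) (Fin n → ZMod d) ℂ) (hU : IsCliffordN d n U) :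
    (∀ u : Fin n → ZMod d × ZMod d,
      ∃ x : ℝ, 0 ≤ x ∧ wigN d n (U * E00N d n * Uᴴ) u = (x : ℂ)) ∧
    (∀ σ : Matrix (Fin n → ZMod d) (Fin n → ZMod d) ℂ, IsStabStateN d n σ →
      (∀ u : Fin n → ZMod d × ZMod d, ∃ x : ℝ, 0 ≤ x ∧ wigN d n σ u = (x : ℂ)) ∧
      wnorm1N d n σ = 1) := by
  constructor
  · intro u
    exact key_nonneg hodd n U hU u
  · intro σ hσ
    obtain ⟨m, p, Us, hp0, hp1, hCl, hσeq⟩ := hσ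
    have hpt : ∀ u : Fin n → ZMod d × ZMod d, ∃ x : ℝ, 0 ≤ x ∧ wigN d n σ u = (x : ℂ) := by
      intro u
      choose x hx0 hxe using fun j => key_nonneg hodd n (Us j) (hCl j) u
      refine ⟨∑ j, p j * x j,
        Finset.sum_nonneg fun j _ => mul_nonneg (hp0 j) (hx0 j), ?_⟩
      rw [hσeq, wigN_sum_smul]
      rw [Finset.sum_congr rfl fun j _ => by rw [hxe j]]
      push_cast
      rfl
    refine ⟨hpt, ?_⟩
    choose x hx0 hxe using hpt
    have htr : σ.trace = 1 := by
      rw [hσeq, Matrix.trace_sum,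
        Finset.sum_congr rfl fun j _ => by
          rw [Matrix.trace_smul, smul_eq_mul, trace_conj_E n (Us j) (hCl j).1, mul_one]]
      rw [← Complex.ofReal_sum, hp1, Complex.ofReal_one]
    have hsumC : (∑ u : Fin n → ZMod d × ZMod d, (x u : ℂ)) = 1 := by
      rw [Finset.sum_congr rfl fun u _ => (hxe u).symm, sum_wigN hodd, htr]
    have hsumR : (∑ u : Fin n → ZMod d × ZMod d, x u) = 1 := by
      rw [← Complex.ofReal_sum] at hsumC
      exact_mod_cast hsumC
    rw [wnorm1N,
      Finset.sum_congr rfl fun u _ => by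
        rw [hxe u, Complex.norm_real, Real.norm_eq_abs, _root_.abs_of_nonneg (hx0 u)]]
    exact hsumR


end Magic
end
end
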